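/- arXiv:1412.4438 — 9 statements merged into one kernel-verified Lean document; each statement's English description precedes it below -/
import Mathlib

section
/- (Opial κ-averaged theorem) Let C be a nonempty closed convex subset of ℝ^d and let P : C → C be a nonexpansive mapping that has at least one fixed point. Fix κ ∈ (0,1) and set P_κ = κ·I + (1−κ)·P. Then for every initial point v⁰ ∈ C, the Picard sequence defined by v^{k+1} = P_κ(v^k) converges to some fixed point of P. -/
open scoped RealInnerProductSpace
open Filter Topology

lemma opial_aux_normsq {E : Type*} [NormedAddCommGroup E] [InnerProductSpace ℝ E]
    (κ : ℝ) (a b : E) :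
    ‖κ • a + (1 - κ) • b‖ ^ 2
      = κ * ‖a‖ ^ 2 + (1 - κ) * ‖b‖ ^ 2 - κ * (1 - κ) * ‖a - b‖ ^ 2 := by
  simp only [← real_inner_self_eq_norm_sq, inner_add_add_self, inner_sub_sub_self,
    real_inner_smul_left, real_inner_smul_right]
  ring

/-- (Opial κ-averaged theorem) Let `C ⊆ ℝ^d` be nonempty, closed and convex, and let
`P : C → C` be nonexpansive with at least one fixed point. For `κ ∈ (0,1)` the Picard
sequence of `P_κ = κ·I + (1−κ)·P` converges to a fixed point of `P`. -/
theorem opial_kappa_averaged (d : ℕ) (C : Set (EuclideanSpace ℝ (Fin d)))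
    (hCne : C.Nonempty) (hCclosed : IsClosed C) (hCconv : Convex ℝ C)
    (P : EuclideanSpace ℝ (Fin d) → EuclideanSpace ℝ (Fin d))
    (hPmaps : Set.MapsTo P C C)
    (hPne : ∀ x ∈ C, ∀ y ∈ C, ‖P x - P y‖ ≤ ‖x - y‖)
    (hPfix : ∃ z ∈ C, P z = z)
    (κ : ℝ) (hκ : κ ∈ Set.Ioo (0 : ℝ) 1)
    (v : ℕ → EuclideanSpace ℝ (Fin d)) (hv0 : v 0 ∈ C)
    (hrec : ∀ k, v (k + 1) = κ • v k + (1 - κ) • P (v k)) :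
    ∃ w ∈ C, P w = w ∧ Tendsto v atTop (𝓝 w) := by
  obtain ⟨hκ0, hκ1⟩ := hκ
  obtain ⟨z, hzC, hzfix⟩ := hPfix
  -- all iterates lie in C
  have hmem : ∀ k, v k ∈ C := by
    intro k
    induction k with
    | zero => exact hv0
    | succ n ih =>
      rw [hrec n]
      exact hCconv ih (hPmaps ih) (le_of_lt hκ0) (by linarith) (by ring)
  -- decomposition of the step
  have hstep : ∀ k, v (k + 1) - z = κ • (v k - z) + (1 - κ) • (P (v k) - z) := by
    intro k
    rw [hrec k]
    module
  -- Fejér monotonicity wrt any fixed point w ∈ C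
  have hfejer : ∀ w ∈ C, P w = w → ∀ k, ‖v (k + 1) - w‖ ≤ ‖v k - w‖ := by
    intro w hwC hwfix k
    have h₁ : v (k + 1) - w = κ • (v k - w) + (1 - κ) • (P (v k) - w) := by
      rw [hrec k]; module
    rw [h₁]
    calc ‖κ • (v k - w) + (1 - κ) • (P (v k) - w)‖
        ≤ ‖κ • (v k - w)‖ + ‖(1 - κ) • (P (v k) - w)‖ := norm_add_le _ _
      _ = κ * ‖v k - w‖ + (1 - κ) * ‖P (v k) - w‖ := by
          rw [norm_smul, norm_smul, Real.norm_eq_abs, Real.norm_eq_abs,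
            abs_of_pos hκ0, abs_of_pos (by linarith)]
      _ ≤ κ * ‖v k - w‖ + (1 - κ) * ‖v k - w‖ := by
          have := hPne (v k) (hmem k) w hwC
          rw [hwfix] at this
          nlinarith
      _ = ‖v k - w‖ := by ring
  have hanti : ∀ w ∈ C, P w = w → Antitone (fun k => ‖v k - w‖) := by
    intro w hwC hwfix
    exact antitone_nat_of_succ_le (hfejer w hwC hwfix)
  -- the key squared inequality
  have hsq : ∀ k, ‖v (k + 1) - z‖ ^ 2
      ≤ ‖v k - z‖ ^ 2 - κ * (1 - κ) * ‖v k - P (v k)‖ ^ 2 := by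
    intro k
    have h₁ := hstep k
    have h₂ : (v k - z) - (P (v k) - z) = v k - P (v k) := by abel
    rw [h₁, opial_aux_normsq, h₂]
    have h₃ : ‖P (v k) - z‖ ≤ ‖v k - z‖ := by
      have := hPne (v k) (hmem k) z hzC
      rwa [hzfix] at this
    have h₄ : ‖P (v k) - z‖ ^ 2 ≤ ‖v k - z‖ ^ 2 :=
      pow_le_pow_left₀ (norm_nonneg _) h₃ 2
    nlinarith
  -- a k := ‖v k - z‖^2 converges
  set a : ℕ → ℝ := fun k => ‖v k - z‖ ^ 2 with ha
  have haanti : Antitone a := by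
    intro m n hmn
    exact pow_le_pow_left₀ (norm_nonneg _) (hanti z hzC hzfix hmn) 2
  have habdd : BddBelow (Set.range a) := ⟨0, by rintro x ⟨k, rfl⟩; positivity⟩
  have haconv : Tendsto a atTop (𝓝 (⨅ k, a k)) :=
    tendsto_atTop_ciInf haanti habdd
  -- asymptotic regularity: ‖v k - P (v k)‖ → 0
  have hdiff : Tendsto (fun k => ‖v k - P (v k)‖ ^ 2) atTop (𝓝 0) := by
    have h₁ : Tendsto (fun k => (a k - a (k + 1)) / (κ * (1 - κ))) atTop (𝓝 0) := by
      have := haconv.sub (haconv.comp (tendsto_add_atTop_nat 1))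
      simpa using this.div_const (κ * (1 - κ))
    have hpos : (0:ℝ) < κ * (1 - κ) := by nlinarith
    refine squeeze_zero (fun k => by positivity) (fun k => ?_) h₁
    rw [le_div_iff₀ hpos]
    have h := hsq k
    show ‖v k - P (v k)‖ ^ 2 * (κ * (1 - κ)) ≤ ‖v k - z‖ ^ 2 - ‖v (k + 1) - z‖ ^ 2
    nlinarith
  have hdiff' : Tendsto (fun k => ‖v k - P (v k)‖) atTop (𝓝 0) := by
    have := (Real.continuous_sqrt.tendsto 0).comp hdiff
    simpa [Real.sqrt_sq (norm_nonneg _), Real.sqrt_zero,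
      Function.comp_def, Real.sqrt_sq_eq_abs, abs_of_nonneg (norm_nonneg _)] using this
  -- boundedness and convergent subsequence
  have hbdd : ∀ k, v k ∈ Metric.closedBall z ‖v 0 - z‖ := by
    intro k
    rw [Metric.mem_closedBall, dist_eq_norm]
    exact hanti z hzC hzfix (Nat.zero_le k)
  obtain ⟨w, hw, φ, hφ, hφt⟩ :=
    tendsto_subseq_of_bounded Metric.isBounded_closedBall hbdd
  -- w ∈ C
  have hwC : w ∈ C :=
    hCclosed.mem_of_tendsto hφt (Eventually.of_forall fun k => hmem (φ k))
  -- P w = w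
  have hPw : P w = w := by
    have h₁ : Tendsto (fun k => P (v (φ k))) atTop (𝓝 (P w)) := by
      rw [tendsto_iff_norm_sub_tendsto_zero]
      have h₂ : Tendsto (fun k => ‖v (φ k) - w‖) atTop (𝓝 0) := by
        rw [tendsto_iff_norm_sub_tendsto_zero] at hφt
        simpa using hφt
      refine squeeze_zero (fun k => norm_nonneg _) (fun k => ?_) h₂
      exact hPne _ (hmem _) w hwC
    have h₃ : Tendsto (fun k => P (v (φ k))) atTop (𝓝 w) := by
      have h₄ : Tendsto (fun k => v (φ k) - P (v (φ k))) atTop (𝓝 0) := by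
        rw [← tendsto_zero_iff_norm_tendsto_zero] at hdiff'
        exact hdiff'.comp (hφ.tendsto_atTop)
      have := hφt.sub h₄
      simpa using this
    exact tendsto_nhds_unique h₁ h₃
  refine ⟨w, hwC, hPw, ?_⟩
  -- ‖v k - w‖ antitone with subsequence → 0, hence → 0
  have hb : Tendsto (fun k => ‖v k - w‖) atTop (𝓝 0) := by
    have hbanti := hanti w hwC hPw
    have hbbdd : BddBelow (Set.range fun k => ‖v k - w‖) :=
      ⟨0, by rintro x ⟨k, rfl⟩; positivity⟩
    have hbconv : Tendsto (fun k => ‖v k - w‖) atTop (𝓝 (⨅ k, ‖v k - w‖)) :=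
      tendsto_atTop_ciInf hbanti hbbdd
    have hsub : Tendsto (fun k => ‖v (φ k) - w‖) atTop (𝓝 0) := by
      rw [tendsto_iff_norm_sub_tendsto_zero] at hφt
      simpa using hφt
    have hsub' : Tendsto (fun k => ‖v (φ k) - w‖) atTop (𝓝 (⨅ k, ‖v k - w‖)) :=
      hbconv.comp hφ.tendsto_atTop
    rwa [tendsto_nhds_unique hsub' hsub] at hbconv
  rw [tendsto_iff_norm_sub_tendsto_zero]
  exact hb
end

section
/- Let f₁ : ℝ^M → ℝ be convex, B : ℝ^N → ℝ^M linear with adjoint Bᵀ, x ∈ ℝ^N, and let λ satisfy 0 < λ < 2/λ_max(BBᵀ), where λ_max(BBᵀ) is the largest eigenvalue of BBᵀ. Define S(v) = (I − prox_{(1/λ)f₁})(Bx + (I − λBBᵀ)v) for v ∈ ℝ^M. If v* ∈ ℝ^M satisfies v* = S(v*), then prox_{f₁∘B}(x) = x − λBᵀv*, i.e. x − λBᵀv* is the unique minimizer over u ∈ ℝ^N of f₁(Bu) + (1/2)‖u − x‖². -/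
open scoped RealInnerProductSpace


lemma fp2o_aux_limit (A C : ℝ) (hC : 0 ≤ C)
    (hA : ∀ t : ℝ, 0 < t → t ≤ 1 → 0 ≤ A + t/2 * C) : 0 ≤ A := by
  by_contra h
  push_neg at h
  have ht : 0 < min 1 ((-A) / (C + 1)) :=
    lt_min one_pos (div_pos (by linarith) (by linarith))
  have hAt := hA _ ht (min_le_left _ _)
  have ht3 : (min 1 ((-A) / (C + 1))) * (C + 1) ≤ -A := by
    rw [← le_div_iff₀ (by linarith : (0:ℝ) < C + 1)]
    exact min_le_right _ _
  nlinarith [mul_nonneg ht.le hC]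

set_option maxHeartbeats 2000000 in
/-- (FP²O) Let `f₁ : ℝ^M → ℝ` be convex, `B : ℝ^N → ℝ^M` linear with adjoint `Bᵀ`,
`x ∈ ℝ^N` and `0 < λ < 2/λ_max(BBᵀ)`. If `v* = S(v*)` where
`S(v) = (I − prox_{(1/λ)f₁})(Bx + (I − λBBᵀ)v)`, then `x − λBᵀv*` is the unique
minimizer of `u ↦ f₁(Bu) + (1/2)‖u − x‖²`, i.e. `prox_{f₁∘B}(x) = x − λBᵀv*`. -/
theorem fp2o_fixed_point_gives_prox (N M : ℕ)
    (f₁ : EuclideanSpace ℝ (Fin M) → ℝ) (hf₁ : ConvexOn ℝ Set.univ f₁)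
    (B : EuclideanSpace ℝ (Fin N) →L[ℝ] EuclideanSpace ℝ (Fin M))
    (Badj : EuclideanSpace ℝ (Fin M) →L[ℝ] EuclideanSpace ℝ (Fin N))
    (hadj : ∀ (x : EuclideanSpace ℝ (Fin N)) (y : EuclideanSpace ℝ (Fin M)),
      ⟪B x, y⟫ = ⟪x, Badj y⟫)
    (x : EuclideanSpace ℝ (Fin N))
    (lmax : ℝ)
    (hlmax : IsGreatest {μ : ℝ | Module.End.HasEigenvalue ((B.comp Badj).toLinearMap) μ} lmax)
    (lam : ℝ) (hlam : 0 < lam) (hlam2 : lam < 2 / lmax)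
    (prox : EuclideanSpace ℝ (Fin M) → EuclideanSpace ℝ (Fin M))
    (hprox : ∀ w p, prox w = p ↔
      ∀ z : EuclideanSpace ℝ (Fin M),
        (1 / lam) * f₁ p + (1 / 2) * ‖p - w‖ ^ 2 ≤ (1 / lam) * f₁ z + (1 / 2) * ‖z - w‖ ^ 2)
    (S : EuclideanSpace ℝ (Fin M) → EuclideanSpace ℝ (Fin M))
    (hS : ∀ v, S v = (B x + (v - lam • B (Badj v))) - prox (B x + (v - lam • B (Badj v))))
    (vs : EuclideanSpace ℝ (Fin M)) (hfix : vs = S vs) :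
    (∀ u : EuclideanSpace ℝ (Fin N),
        f₁ (B (x - lam • Badj vs)) + (1 / 2) * ‖(x - lam • Badj vs) - x‖ ^ 2
          ≤ f₁ (B u) + (1 / 2) * ‖u - x‖ ^ 2) ∧
    (∀ u : EuclideanSpace ℝ (Fin N),
        (∀ z : EuclideanSpace ℝ (Fin N),
          f₁ (B u) + (1 / 2) * ‖u - x‖ ^ 2 ≤ f₁ (B z) + (1 / 2) * ‖z - x‖ ^ 2) →
        u = x - lam • Badj vs) := by
  set u0 : EuclideanSpace ℝ (Fin N) := x - lam • Badj vs with hu0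
  set w : EuclideanSpace ℝ (Fin M) := B x + (vs - lam • B (Badj vs)) with hw
  have hproxw : prox w = B u0 := by
    rw [hS vs, ← hw] at hfix
    have h1 : prox w = w - vs := by rw [hfix]; abel
    have h2 : B u0 = w - vs := by
      rw [hu0, hw, map_sub, map_smul]; abel
    rw [h1, h2]
  have hkey := (hprox w (B u0)).mp hproxw
  have hpw : B u0 - w = -vs := by
    rw [hu0, hw, map_sub, map_smul]; abel
  -- subgradient inequality
  have hsub : ∀ z, f₁ (B u0) + lam * ⟪vs, z - B u0⟫ ≤ f₁ z := by
    intro z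
    set p := B u0 with hp
    set d := z - p with hd
    have hA : ∀ t : ℝ, 0 < t → t ≤ 1 →
        0 ≤ (1/lam) * (f₁ z - f₁ p) - ⟪vs, d⟫ + t/2 * ‖d‖^2 := by
      intro t ht ht1
      have hzt : (1 - t) • p + t • z = p + t • d := by rw [hd]; module
      have hconv := hf₁.2 (Set.mem_univ p) (Set.mem_univ z)
          (by linarith : (0:ℝ) ≤ 1 - t) ht.le (by ring)
      rw [hzt] at hconv
      have hk := hkey (p + t • d)
      have hztw : (p + t • d) - w = -vs + t • d := by
        rw [← hpw]; abel
      rw [hztw, hpw] at hk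
      have hnorm : ‖-vs + t • d‖^2 = ‖vs‖^2 - 2*(t*⟪vs,d⟫) + t^2*‖d‖^2 := by
        rw [norm_add_sq_real, norm_neg, inner_neg_left, inner_smul_right, norm_smul,
          Real.norm_eq_abs, mul_pow, sq_abs]
        ring
      rw [hnorm, norm_neg] at hk
      have hlpos : (0:ℝ) < 1/lam := by positivity
      have hc2 : (1/lam) * f₁ (p + t • d) ≤ (1/lam) * ((1-t) * f₁ p + t * f₁ z) :=
        mul_le_mul_of_nonneg_left hconv hlpos.le
      have h1 : 0 ≤ t * ((1/lam) * (f₁ z - f₁ p) - ⟪vs, d⟫ + t/2 * ‖d‖^2) := by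
        nlinarith [hk, hc2]
      have := (mul_nonneg_iff_of_pos_left ht).mp h1
      linarith
    have hA0 : 0 ≤ (1/lam) * (f₁ z - f₁ p) - ⟪vs, d⟫ :=
      fp2o_aux_limit _ _ (by positivity) hA
    have hmul : lam * ⟪vs, d⟫ ≤ lam * ((1/lam) * (f₁ z - f₁ p)) :=
      mul_le_mul_of_nonneg_left (by linarith) hlam.le
    rw [show lam * ((1/lam) * (f₁ z - f₁ p)) = f₁ z - f₁ p by
      rw [← mul_assoc, mul_one_div, div_self hlam.ne', one_mul]] at hmul
    linarith
  -- main strong-convexity inequality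
  have hmain : ∀ u, f₁ (B u0) + (1/2) * ‖u0 - x‖^2 + (1/2) * ‖u - u0‖^2
      ≤ f₁ (B u) + (1/2) * ‖u - x‖^2 := by
    intro u
    have h1 := hsub (B u)
    have h2 : lam * ⟪vs, B u - B u0⟫ = ⟪u - u0, x - u0⟫ := by
      rw [← map_sub]
      rw [real_inner_comm, hadj]
      rw [show x - u0 = lam • Badj vs by rw [hu0]; abel, real_inner_smul_right]
    rw [h2] at h1
    have h4 : ‖u - x‖^2 = ‖u - u0‖^2 + 2*⟪u - u0, u0 - x⟫ + ‖u0 - x‖^2 := by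
      have h := norm_add_sq_real (u - u0) (u0 - x)
      rw [show (u - u0) + (u0 - x) = u - x by abel] at h
      linarith
    have h5 : ⟪u - u0, u0 - x⟫ = -⟪u - u0, x - u0⟫ := by
      rw [show u0 - x = -(x - u0) by abel, inner_neg_right]
    linarith
  constructor
  · intro u
    have h := hmain u
    have : (0:ℝ) ≤ ‖u - u0‖^2 := by positivity
    linarith
  · intro u hu
    have h1 := hu u0
    have h2 := hmain u
    have h3 : ‖u - u0‖^2 ≤ 0 := by linarith
    have h4 : ‖u - u0‖ = 0 := by nlinarith [norm_nonneg (u - u0)]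
    have h5 : u - u0 = 0 := by rwa [norm_eq_zero] at h4
    exact sub_eq_zero.mp h5
end

section
/- Let f₁ : ℝ^M → ℝ be convex, B : ℝ^N → ℝ^M linear with adjoint Bᵀ, Q a symmetric positive definite linear map on ℝ^N with inverse Q⁻¹, x ∈ ℝ^N and λ > 0. Define Ŝ(v) = (I − prox_{(1/λ)f₁})(BQ⁻¹x + (I − λBQ⁻¹Bᵀ)v) for v ∈ ℝ^M. If v* ∈ ℝ^M satisfies v* = Ŝ(v*), then u* = Q⁻¹(x − λBᵀv*) is a minimizer over u ∈ ℝ^N of f₁(Bu) + (1/2)⟨u, Qu⟩ − ⟨x, u⟩. -/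
set_option maxHeartbeats 2000000


open scoped RealInnerProductSpace

/-- Let `f₁ : ℝ^M → ℝ` be convex, `B` linear with adjoint `Bᵀ`, `Q` symmetric positive
definite with inverse `Q⁻¹`, `x ∈ ℝ^N` and `λ > 0`. If `v* = Ŝ(v*)` where
`Ŝ(v) = (I − prox_{(1/λ)f₁})(BQ⁻¹x + (I − λBQ⁻¹Bᵀ)v)`, then
`u* = Q⁻¹(x − λBᵀv*)` minimizes `u ↦ f₁(Bu) + (1/2)⟨u, Qu⟩ − ⟨x, u⟩`. -/
theorem fp2o_general_quadratic_fixed_point (N M : ℕ)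
    (f₁ : EuclideanSpace ℝ (Fin M) → ℝ) (hf₁ : ConvexOn ℝ Set.univ f₁)
    (B : EuclideanSpace ℝ (Fin N) →L[ℝ] EuclideanSpace ℝ (Fin M))
    (Badj : EuclideanSpace ℝ (Fin M) →L[ℝ] EuclideanSpace ℝ (Fin N))
    (hadj : ∀ (x : EuclideanSpace ℝ (Fin N)) (y : EuclideanSpace ℝ (Fin M)),
      ⟪B x, y⟫ = ⟪x, Badj y⟫)
    (Q Qinv : EuclideanSpace ℝ (Fin N) →L[ℝ] EuclideanSpace ℝ (Fin N))
    (hQsymm : ∀ x y : EuclideanSpace ℝ (Fin N), ⟪Q x, y⟫ = ⟪x, Q y⟫)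
    (hQpos : ∀ x : EuclideanSpace ℝ (Fin N), x ≠ 0 → 0 < ⟪x, Q x⟫)
    (hQinv₁ : ∀ x, Qinv (Q x) = x) (hQinv₂ : ∀ x, Q (Qinv x) = x)
    (x : EuclideanSpace ℝ (Fin N))
    (lam : ℝ) (hlam : 0 < lam)
    (prox : EuclideanSpace ℝ (Fin M) → EuclideanSpace ℝ (Fin M))
    (hprox : ∀ w p, prox w = p ↔
      ∀ z : EuclideanSpace ℝ (Fin M),
        (1 / lam) * f₁ p + (1 / 2) * ‖p - w‖ ^ 2 ≤ (1 / lam) * f₁ z + (1 / 2) * ‖z - w‖ ^ 2)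
    (S : EuclideanSpace ℝ (Fin M) → EuclideanSpace ℝ (Fin M))
    (hS : ∀ v, S v = (B (Qinv x) + (v - lam • B (Qinv (Badj v))))
      - prox (B (Qinv x) + (v - lam • B (Qinv (Badj v)))))
    (vs : EuclideanSpace ℝ (Fin M)) (hfix : vs = S vs) :
    ∀ u : EuclideanSpace ℝ (Fin N),
      f₁ (B (Qinv (x - lam • Badj vs)))
          + (1 / 2) * ⟪Qinv (x - lam • Badj vs), Q (Qinv (x - lam • Badj vs))⟫
          - ⟪x, Qinv (x - lam • Badj vs)⟫
        ≤ f₁ (B u) + (1 / 2) * ⟪u, Q u⟫ - ⟪x, u⟫ := by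

  intro u
  set us := Qinv (x - lam • Badj vs) with hus
  have h := hfix.trans (hS vs)
  set w := B (Qinv x) + (vs - lam • B (Qinv (Badj vs))) with hw
  have hBus : B us = w - vs := by
    simp only [hus, hw, map_sub, map_smul]
    abel
  have hproxw : prox w = B us := by
    rw [hBus, h]; abel
  have hQus : Q us = x - lam • Badj vs := hQinv₂ _
  have hpw : B us - w = -vs := by rw [hBus]; abel
  -- key subgradient inequality
  have key : ∀ z, f₁ (B us) + lam * ⟪vs, z - B us⟫ ≤ f₁ z := by
    intro z
    refine le_of_forall_pos_le_add fun ε hε => ?_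
    set p := B us with hp
    set C := (lam / 2) * ‖z - p‖ ^ 2 with hC
    have hC0 : 0 ≤ C := by positivity
    set t := min 1 (ε / (C + 1)) with ht
    have ht0 : 0 < t := lt_min one_pos (div_pos hε (by linarith))
    have ht1 : t ≤ 1 := min_le_left _ _
    have htC : t * C ≤ ε := by
      have h1 : t ≤ ε / (C + 1) := min_le_right _ _
      have h2 : 0 < C + 1 := by linarith
      calc t * C ≤ (ε / (C + 1)) * C := mul_le_mul_of_nonneg_right h1 hC0
        _ ≤ (ε / (C + 1)) * (C + 1) :=
            mul_le_mul_of_nonneg_left (by linarith) (le_of_lt (div_pos hε h2))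
        _ = ε := div_mul_cancel₀ _ (ne_of_gt h2)
    have hpx := (hprox w (B us)).mp hproxw (p + t • (z - p))
    have e1 : ‖p - w‖ ^ 2 = ‖vs‖ ^ 2 := by rw [hpw, norm_neg]
    have e2 : ‖(p + t • (z - p)) - w‖ ^ 2
        = ‖vs‖ ^ 2 - 2 * (t * ⟪vs, z - p⟫) + t ^ 2 * ‖z - p‖ ^ 2 := by
      have hq : (p + t • (z - p)) - w = -vs + t • (z - p) := by
        rw [← hpw]; abel
      rw [hq, norm_add_sq_real, norm_neg, norm_smul, inner_neg_left,
        real_inner_smul_right, Real.norm_eq_abs, abs_of_pos ht0]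
      ring
    rw [e1, e2] at hpx
    have hlne : lam ≠ 0 := ne_of_gt hlam
    have hpx' : f₁ p + (lam / 2) * ‖vs‖ ^ 2
        ≤ f₁ (p + t • (z - p)) + (lam / 2) * (‖vs‖ ^ 2 - 2 * (t * ⟪vs, z - p⟫)
          + t ^ 2 * ‖z - p‖ ^ 2) := by
      have h3 := mul_le_mul_of_nonneg_left hpx hlam.le
      rw [mul_add, mul_add, ← mul_assoc, ← mul_assoc, ← mul_assoc, ← mul_assoc,
        mul_one_div_cancel hlne] at h3
      linarith
    have hconv : f₁ (p + t • (z - p)) ≤ (1 - t) * f₁ p + t * f₁ z := by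
      have hq : p + t • (z - p) = (1 - t) • p + t • z := by
        rw [smul_sub, sub_smul, one_smul]; abel
      rw [hq]
      exact hf₁.2 (Set.mem_univ p) (Set.mem_univ z) (by linarith) ht0.le (by ring)
    have h8 : t * ((f₁ p + lam * ⟪vs, z - p⟫) - f₁ z) ≤ t * (t * C) := by
      nlinarith [hpx', hconv]
    have h9 : (f₁ p + lam * ⟪vs, z - p⟫) - f₁ z ≤ t * C :=
      (mul_le_mul_iff_right₀ ht0).mp h8
    linarith
  have hkey := key (B u)
  -- quadratic part
  have hd : (0 : ℝ) ≤ ⟪u - us, Q (u - us)⟫ := by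
    rcases eq_or_ne (u - us) 0 with hz | hz
    · rw [hz]; simp
    · exact (hQpos _ hz).le
  have a1 : ⟪u - us, Q (u - us)⟫
      = ⟪u, Q u⟫ - ⟪u, Q us⟫ - ⟪us, Q u⟫ + ⟪us, Q us⟫ := by
    rw [map_sub, inner_sub_left, inner_sub_right, inner_sub_right]; ring
  have a2 : ⟪us, Q u⟫ = ⟪u, Q us⟫ := by
    rw [real_inner_comm, hQsymm]
  have a3 : lam * ⟪vs, B u - B us⟫
      = ⟪u, x⟫ - ⟪us, x⟫ - ⟪u, Q us⟫ + ⟪us, Q us⟫ := by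
    have h1 : ⟪vs, B u - B us⟫ = ⟪u - us, Badj vs⟫ := by
      rw [inner_sub_right, real_inner_comm (B u) vs, real_inner_comm (B us) vs,
        hadj, hadj, ← inner_sub_left]
    have h2 : lam • Badj vs = x - Q us := by rw [hQus]; abel
    rw [h1, ← real_inner_smul_right, h2, inner_sub_right, inner_sub_left,
      inner_sub_left]
    ring
  have c1 : ⟪x, u⟫ = ⟪u, x⟫ := real_inner_comm _ _
  have c2 : ⟪x, us⟫ = ⟪us, x⟫ := real_inner_comm _ _
  rw [inner_sub_right] at hkey
  rw [a1, a2] at hd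
  rw [inner_sub_right] at a3
  linarith [hkey, hd, a3]
end

section
/- Let f₁ : ℝ^M → ℝ be convex, B : ℝ^N → ℝ^M linear with adjoint Bᵀ, and f₂ : ℝ^N → ℝ convex and differentiable with gradient ∇f₂. Then u* ∈ ℝ^N minimizes u ↦ f₁(Bu) + f₂(u) over ℝ^N if and only if there exists y ∈ ∂f₁(Bu*) such that ∇f₂(u*) + Bᵀy = 0. -/
open scoped RealInnerProductSpace

variable {E : Type*} [NormedAddCommGroup E] [NormedSpace ℝ E]

/-- Slope monotonicity for a convex function. -/
theorem slope_mono_aux {f : E → ℝ} (hf : ConvexOn ℝ Set.univ f) (a d : E) {s t : ℝ}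
    (hs : 0 < s) (hst : s ≤ t) :
    (f (a + s • d) - f a) / s ≤ (f (a + t • d) - f a) / t := by
  have ht : 0 < t := hs.trans_le hst
  have hpt : a + s • d = (1 - s / t) • a + (s / t) • (a + t • d) := by
    rw [smul_add, smul_smul, div_mul_cancel₀ _ ht.ne']
    module
  have h1 : (0:ℝ) ≤ 1 - s / t := by
    have : s / t ≤ 1 := (div_le_one ht).2 hst
    linarith
  have h2 : (0:ℝ) ≤ s / t := by positivity
  have h3 : (1 - s / t) + s / t = 1 := by ring
  have key := hf.2 (Set.mem_univ a) (Set.mem_univ (a + t • d)) h1 h2 h3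
  rw [← hpt] at key
  rw [div_le_div_iff₀ hs ht]
  have hd : s / t * t = s := div_mul_cancel₀ _ ht.ne'
  simp only [smul_eq_mul] at key
  have e1 : s/t * t * f a = s * f a := by rw [hd]
  have e2 : s/t * t * f (a+t•d) = s * f (a+t•d) := by rw [hd]
  nlinarith [mul_le_mul_of_nonneg_right key ht.le, e1, e2]

theorem convex_gradient_ineq {E : Type*} [NormedAddCommGroup E] [InnerProductSpace ℝ E] [CompleteSpace E]
    {f : E → ℝ} (hf : ConvexOn ℝ Set.univ f) {c x : E} (h : HasGradientAt f c x) (y : E) :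
    f x + @inner ℝ _ _ c (y - x) ≤ f y := by
  set d := y - x with hd
  have hcurve : HasDerivAt (fun t : ℝ => x + t • d) d 0 := by
    simpa using ((hasDerivAt_id (0:ℝ)).smul_const d).const_add x
  have hg : HasDerivAt (fun t : ℝ => f (x + t • d)) (@inner ℝ _ _ c d) 0 := by
    have hfd := h.hasFDerivAt
    have hfd' : HasFDerivAt f ((InnerProductSpace.toDual ℝ E) c) ((fun t : ℝ => x + t • d) 0) := by
      simpa using hfd
    have := hfd'.comp_hasDerivAt (0:ℝ) hcurve
    simp at this; exact this
  set g : ℝ → ℝ := fun t => f (x + t • d) with hgdef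
  have hslope : Filter.Tendsto (slope g 0) (nhdsWithin 0 (Set.Ioi 0)) (nhds (@inner ℝ _ _ c d)) :=
    (hasDerivAt_iff_tendsto_slope.1 hg).mono_left
      (nhdsWithin_mono _ (by intro t ht; exact ne_of_gt ht))
  have hev : ∀ᶠ t in nhdsWithin (0:ℝ) (Set.Ioi 0), slope g 0 t ≤ g 1 - g 0 := by
    filter_upwards [Ioc_mem_nhdsGT_of_mem (Set.mem_Ico.2 ⟨le_refl (0:ℝ), one_pos⟩)] with t ht
    have := slope_mono_aux hf x d ht.1 ht.2
    simp only [slope_def_field, hgdef] at *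
    rw [div_one] at this
    simpa [sub_zero] using this
  have hle : @inner ℝ _ _ c d ≤ g 1 - g 0 := le_of_tendsto hslope hev
  have : g 1 = f y := by simp [hgdef, hd]
  have h0 : g 0 = f x := by simp [hgdef]
  rw [this, h0] at hle
  linarith

set_option maxHeartbeats 1000000 in
/-- First-order optimality for the composite problem: `u*` minimizes
`u ↦ f₁(Bu) + f₂(u)` iff there exists `y ∈ ∂f₁(Bu*)` with `∇f₂(u*) + Bᵀy = 0`. -/
theorem composite_first_order_optimality (N M : ℕ)
    (f₁ : EuclideanSpace ℝ (Fin M) → ℝ) (hf₁ : ConvexOn ℝ Set.univ f₁)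
    (B : EuclideanSpace ℝ (Fin N) →L[ℝ] EuclideanSpace ℝ (Fin M))
    (Badj : EuclideanSpace ℝ (Fin M) →L[ℝ] EuclideanSpace ℝ (Fin N))
    (hadj : ∀ (x : EuclideanSpace ℝ (Fin N)) (y : EuclideanSpace ℝ (Fin M)),
      ⟪B x, y⟫ = ⟪x, Badj y⟫)
    (f₂ : EuclideanSpace ℝ (Fin N) → ℝ) (hf₂ : ConvexOn ℝ Set.univ f₂)
    (gradf₂ : EuclideanSpace ℝ (Fin N) → EuclideanSpace ℝ (Fin N))
    (hgrad : ∀ u, HasGradientAt f₂ (gradf₂ u) u)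
    (us : EuclideanSpace ℝ (Fin N)) :
    (∀ u : EuclideanSpace ℝ (Fin N), f₁ (B us) + f₂ us ≤ f₁ (B u) + f₂ u) ↔
      ∃ y : EuclideanSpace ℝ (Fin M),
        (∀ z : EuclideanSpace ℝ (Fin M), f₁ (B us) + ⟪y, z - B us⟫ ≤ f₁ z) ∧
        gradf₂ us + Badj y = 0 := by
  constructor
  · intro hmin
    set a : EuclideanSpace ℝ (Fin M) := B us with ha
    set c : EuclideanSpace ℝ (Fin N) := gradf₂ us with hc
    set DQ : EuclideanSpace ℝ (Fin M) → ℝ → ℝ := fun z t => (f₁ (a + t • z) - f₁ a) / t with hDQ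
    set S : EuclideanSpace ℝ (Fin M) → Set ℝ := fun z => {q : ℝ | ∃ t : ℝ, 0 < t ∧ q = DQ z t} with hS
    set h : EuclideanSpace ℝ (Fin M) → ℝ := fun z => sInf (S z) with hh
    have hSne : ∀ z, (S z).Nonempty := fun z => ⟨_, 1, one_pos, rfl⟩
    have hSbdd : ∀ z, BddBelow (S z) := by
      intro z
      refine ⟨f₁ a - f₁ (a - z), ?_⟩
      rintro q ⟨t, ht, rfl⟩
      have h1 : (0:ℝ) < t + 1 := by linarith
      have hcomb : a = (t/(t+1)) • (a - z) + (1/(t+1)) • (a + t • z) := by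
        match_scalars <;> field_simp <;> ring
      have hw1 : (0:ℝ) ≤ t/(t+1) := by positivity
      have hw2 : (0:ℝ) ≤ 1/(t+1) := by positivity
      have hw3 : t/(t+1) + 1/(t+1) = 1 := by field_simp
      have key := hf₁.2 (Set.mem_univ (a - z)) (Set.mem_univ (a + t • z)) hw1 hw2 hw3
      rw [← hcomb] at key
      simp only [smul_eq_mul] at key
      have key' : (t+1) * f₁ a ≤ t * f₁ (a - z) + f₁ (a + t • z) := by
        calc (t+1) * f₁ a ≤ (t+1) * (t/(t+1) * f₁ (a - z) + 1/(t+1) * f₁ (a + t • z)) :=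
              mul_le_mul_of_nonneg_left key h1.le
          _ = t * f₁ (a - z) + f₁ (a + t • z) := by field_simp; try ring
      simp only [hDQ]
      rw [le_div_iff₀ ht]
      nlinarith [key']
    have hle_DQ : ∀ z t, 0 < t → h z ≤ DQ z t := fun z t ht => csInf_le (hSbdd z) ⟨t, ht, rfl⟩
    have hglb : ∀ z b, (∀ t, 0 < t → b ≤ DQ z t) → b ≤ h z := by
      intro z b hb
      exact le_csInf (hSne z) (by rintro q ⟨t, ht, rfl⟩; exact hb t ht)
    have h0 : h 0 = 0 := by
      apply le_antisymm
      · simpa [hDQ] using hle_DQ 0 1 one_pos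
      · exact hglb 0 0 (fun t ht => by simp [hDQ])
    -- positive homogeneity
    have N_hom : ∀ r : ℝ, 0 < r → ∀ z, h (r • z) = r * h z := by
      intro r hr z
      have scale : ∀ t : ℝ, 0 < t → DQ (r • z) t = r * DQ z (t * r) := by
        intro t ht
        simp only [hDQ, smul_smul, mul_comm t r]
        field_simp
      apply le_antisymm
      · rw [← div_le_iff₀' hr]
        apply hglb
        intro t ht
        rw [div_le_iff₀' hr]
        have := hle_DQ (r • z) (t / r) (by positivity)
        rwa [scale _ (by positivity), div_mul_cancel₀ _ hr.ne'] at this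
      · apply hglb
        intro s hs
        rw [scale s hs]
        exact mul_le_mul_of_nonneg_left (hle_DQ z (s * r) (by positivity)) hr.le
    -- subadditivity
    have N_add : ∀ x z, h (x + z) ≤ h x + h z := by
      intro x z
      have key : ∀ t s : ℝ, 0 < t → 0 < s → h (x + z) ≤ DQ x t + DQ z s := by
        intro t s ht hs
        have hts : (0:ℝ) < t + s := by linarith
        set r := t * s / (t + s) with hr
        have hrpos : 0 < r := by positivity
        have hcomb : a + r • (x + z) = (s/(t+s)) • (a + t • x) + (t/(t+s)) • (a + s • z) := by
          rw [hr]
          match_scalars <;> field_simp <;> ring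
        have hw1 : (0:ℝ) ≤ s/(t+s) := by positivity
        have hw2 : (0:ℝ) ≤ t/(t+s) := by positivity
        have hw3 : s/(t+s) + t/(t+s) = 1 := by
          rw [← add_div, add_comm s t, div_self hts.ne']
        have kk := hf₁.2 (Set.mem_univ (a + t • x)) (Set.mem_univ (a + s • z)) hw1 hw2 hw3
        rw [← hcomb] at kk
        simp only [smul_eq_mul] at kk
        have key' : (t+s) * f₁ (a + r • (x + z)) ≤ s * f₁ (a + t • x) + t * f₁ (a + s • z) := by
          calc (t+s) * f₁ (a + r • (x + z))
              ≤ (t+s) * (s/(t+s) * f₁ (a + t • x) + t/(t+s) * f₁ (a + s • z)) :=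
                mul_le_mul_of_nonneg_left kk hts.le
            _ = s * f₁ (a + t • x) + t * f₁ (a + s • z) := by field_simp; try ring
        refine (hle_DQ (x + z) r hrpos).trans ?_
        simp only [hDQ]
        rw [div_add_div _ _ ht.ne' hs.ne', div_le_div_iff₀ hrpos (by positivity), hr,
          mul_div_assoc', le_div_iff₀ hts]
        nlinarith [mul_le_mul_of_nonneg_right key' (mul_pos ht hs).le]
      -- infimum passage
      have step1 : ∀ t, 0 < t → h (x + z) - DQ x t ≤ h z := by
        intro t ht
        apply hglb
        intro s hs
        linarith [key t s ht hs]
      apply by_contra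
      intro hcon
      push_neg at hcon
      have : ∀ t, 0 < t → h (x + z) - h z ≤ DQ x t := fun t ht => by linarith [step1 t ht]
      have := hglb x _ this
      linarith
    -- key inequality from minimality
    have hkey : ∀ v : EuclideanSpace ℝ (Fin N), -⟪c, v⟫ ≤ h (B v) := by
      intro v
      apply le_of_forall_pos_le_add
      intro ε hε
      -- derivative of t ↦ f₂ (us + t • v) at 0 is ⟪c, v⟫
      have hcurve : HasDerivAt (fun t : ℝ => us + t • v) v 0 := by
        simpa using ((hasDerivAt_id (0:ℝ)).smul_const v).const_add us
      have hfd' : HasFDerivAt f₂ ((InnerProductSpace.toDual ℝ (EuclideanSpace ℝ (Fin N))) c)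
          ((fun t : ℝ => us + t • v) 0) := by
        simpa [hc] using (hgrad us).hasFDerivAt
      have hg : HasDerivAt (fun t : ℝ => f₂ (us + t • v)) ⟪c, v⟫ 0 := by
        have := hfd'.comp_hasDerivAt (0:ℝ) hcurve; simp at this; exact this
      have hslope := hasDerivAt_iff_tendsto_slope.1 hg
      have hslope' : Filter.Tendsto (slope (fun t : ℝ => f₂ (us + t • v)) 0)
          (nhdsWithin 0 (Set.Ioi 0)) (nhds ⟪c, v⟫) :=
        hslope.mono_left (nhdsWithin_mono _ (by intro t ht; exact ne_of_gt ht))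
      have hev : ∀ᶠ s in nhdsWithin (0:ℝ) (Set.Ioi 0),
          slope (fun t : ℝ => f₂ (us + t • v)) 0 s < ⟪c, v⟫ + ε :=
        hslope'.eventually (eventually_lt_nhds (by linarith))
      rw [Filter.eventually_iff, mem_nhdsWithin] at hev
      obtain ⟨U, hUopen, hU0, hUsub⟩ := hev
      obtain ⟨δ, hδ, hball⟩ := Metric.isOpen_iff.1 hUopen 0 hU0
      have main : -⟪c, v⟫ - ε ≤ h (B v) := by
        apply hglb
        intro t ht
        -- take s = min t (δ/2)
        set s := min t (δ/2) with hsdef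
        have hs : 0 < s := lt_min ht (by linarith)
        have hst : s ≤ t := min_le_left _ _
        have hsδ : s ∈ U := hball (by
          simp only [Metric.mem_ball, Real.dist_eq, sub_zero, abs_of_pos hs]
          calc s ≤ δ/2 := min_le_right _ _
            _ < δ := by linarith)
        have hsl : slope (fun t : ℝ => f₂ (us + t • v)) 0 s < ⟪c, v⟫ + ε :=
          hUsub ⟨hsδ, hs⟩
        rw [slope_def_field] at hsl
        simp only [zero_smul, add_zero, sub_zero, div_one] at hsl
        -- hsl : (f₂ (us + s • v) - f₂ us) / (s - 0) > ⟪c,v⟫ - ε  (roughly)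
        have hminS := hmin (us + s • v)
        have hBs : B (us + s • v) = a + s • (B v) := by
          rw [map_add, map_smul, ha]
        rw [hBs] at hminS
        -- DQ (B v) s ≥ -(f₂(us+s v)-f₂ us)/s ≥ -(⟪c,v⟫ ... )
        have step : -(⟪c, v⟫) - ε ≤ DQ (B v) s := by
          have hq : (f₂ (us + s • v) - f₂ us) / s < ⟪c, v⟫ + ε := by
            simpa [sub_zero] using hsl
          simp only [hDQ]
          rw [le_div_iff₀ hs]
          rw [div_lt_iff₀ hs] at hq
          nlinarith [hminS, hq]
        calc -⟪c, v⟫ - ε ≤ DQ (B v) s := step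
          _ ≤ DQ (B v) t := by
              have := slope_mono_aux hf₁ a (B v) hs hst
              simp only [hDQ]; exact this
      linarith
    -- Hahn-Banach extension
    set Bl : EuclideanSpace ℝ (Fin N) →ₗ[ℝ] EuclideanSpace ℝ (Fin M) := B.toLinearMap with hBl
    set φ : EuclideanSpace ℝ (Fin N) →ₗ[ℝ] ℝ :=
      -((InnerProductSpace.toDual ℝ (EuclideanSpace ℝ (Fin N)) c) :
        EuclideanSpace ℝ (Fin N) →ₗ[ℝ] ℝ) with hφ
    have hφ_apply : ∀ v, φ v = -⟪c, v⟫ := by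
      intro v
      simp [hφ, InnerProductSpace.toDual_apply_apply]
    have hker : LinearMap.ker Bl ≤ LinearMap.ker φ := by
      intro v hv
      rw [LinearMap.mem_ker] at hv ⊢
      have h1 : -⟪c, v⟫ ≤ 0 := by
        have := hkey v
        rw [show B v = (0 : EuclideanSpace ℝ (Fin M)) from hv, h0] at this
        exact this
      have h2 : ⟪c, v⟫ ≤ 0 := by
        have := hkey (-v)
        rw [show B (-v) = (0 : EuclideanSpace ℝ (Fin M)) by rw [map_neg, show B v = (0 : EuclideanSpace ℝ (Fin M)) from hv, neg_zero], h0,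
          inner_neg_right] at this
        linarith
      rw [hφ_apply]
      linarith
    set toF : LinearMap.range Bl →ₗ[ℝ] ℝ :=
      (Submodule.liftQ (LinearMap.ker Bl) φ hker).comp
        (LinearMap.quotKerEquivRange Bl).symm.toLinearMap with htoF
    have htoF_apply : ∀ v : EuclideanSpace ℝ (Fin N),
        toF ⟨Bl v, LinearMap.mem_range.2 ⟨v, rfl⟩⟩ = φ v := by
      intro v
      have e1 := LinearMap.quotKerEquivRange_symm_apply_image (f := Bl) v
        (LinearMap.mem_range.2 ⟨v, rfl⟩)
      simp only [htoF, LinearMap.comp_apply, LinearEquiv.coe_toLinearMap, e1,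
        Submodule.mkQ_apply, Submodule.liftQ_apply]
    set pm : EuclideanSpace ℝ (Fin M) →ₗ.[ℝ] ℝ := ⟨LinearMap.range Bl, toF⟩ with hpm
    have hdom : ∀ x : pm.domain, pm x ≤ h x := by
      rintro ⟨x, hx⟩
      obtain ⟨v, rfl⟩ := LinearMap.mem_range.1 hx
      have : pm ⟨Bl v, LinearMap.mem_range.2 ⟨v, rfl⟩⟩ = φ v := htoF_apply v
      rw [this, hφ_apply]
      exact hkey v
    obtain ⟨g, hg1, hg2⟩ := exists_extension_of_le_sublinear pm h
      (fun r hr z => N_hom r hr z) N_add hdom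
    set y : EuclideanSpace ℝ (Fin M) :=
      (InnerProductSpace.toDual ℝ (EuclideanSpace ℝ (Fin M))).symm
        (LinearMap.toContinuousLinearMap g) with hy
    have hy_inner : ∀ z, ⟪y, z⟫ = g z := by
      intro z
      rw [hy, InnerProductSpace.toDual_symm_apply]
      rfl
    refine ⟨y, ?_, ?_⟩
    · intro z
      have hgz : g (z - a) ≤ h (z - a) := hg2 (z - a)
      have hDQ1 : h (z - a) ≤ f₁ z - f₁ a := by
        have := hle_DQ (z - a) 1 one_pos
        simpa [hDQ] using this
      have := hy_inner (z - a)
      linarith [hgz, hDQ1, this.le, this.ge]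
    · have hyB : ∀ v, ⟪y, B v⟫ = -⟪c, v⟫ := by
        intro v
        rw [hy_inner]
        have h1 : g (Bl v) = φ v :=
          (hg1 ⟨Bl v, LinearMap.mem_range.2 ⟨v, rfl⟩⟩).trans (htoF_apply v)
        rw [hφ_apply] at h1
        exact h1
      have hzero : ∀ v, ⟪c + Badj y, v⟫ = (0:ℝ) := by
        intro v
        rw [inner_add_left]
        have e : ⟪(Badj y : EuclideanSpace ℝ (Fin N)), v⟫ = -⟪c, v⟫ := by
          rw [real_inner_comm, ← hadj, real_inner_comm]
          exact hyB v
        rw [e]; ring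
      have : c + Badj y = 0 := by
        have := hzero (c + Badj y)
        exact inner_self_eq_zero.1 this
      exact this
  · rintro ⟨y, hy, heq⟩
    intro u
    have h1 : f₁ (B us) + ⟪y, B u - B us⟫ ≤ f₁ (B u) := hy (B u)
    have h2 : f₂ us + ⟪gradf₂ us, u - us⟫ ≤ f₂ u := convex_gradient_ineq hf₂ (hgrad us) u
    have h4 : (Badj y) = -gradf₂ us := eq_neg_of_add_eq_zero_right heq
    have h3 : ⟪y, B u - B us⟫ = -⟪gradf₂ us, u - us⟫ := by
      rw [← map_sub, real_inner_comm, hadj, h4, inner_neg_right, real_inner_comm]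
    rw [h3] at h1
    linarith
end

section
/- (Theorem 1) A point u* ∈ ℝ^N is a solution of the minimization problem min_{u ∈ ℝ^N} f₁(Bu) + f₂(u) if and only if there exists v* ∈ ℝ^M such that v* = T₁(v*, u*) and u* = T₂(v*, u*), i.e. (v*, u*) is a fixed point of T. -/
open scoped RealInnerProductSpace



lemma aux_grad_ineq {E : Type*} [NormedAddCommGroup E] [InnerProductSpace ℝ E] [CompleteSpace E]
    (f : E → ℝ) (hf : ConvexOn ℝ Set.univ f) {x g : E}
    (h : HasGradientAt f g x) (y : E) : f x + ⟪g, y - x⟫ ≤ f y := by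
  set d := y - x with hd
  have hφ : ConvexOn ℝ Set.univ (fun t : ℝ => f (x + t • d)) := by
    refine ⟨convex_univ, ?_⟩
    intro s _ t _ a b ha hb hab
    have h2 : x + (a * s + b * t) • d = a • (x + s • d) + b • (x + t • d) := by
      have h3 : a • (x + s • d) + b • (x + t • d) = (a + b) • x + (a * s + b * t) • d := by
        module
      rw [h3, hab, one_smul]
    have := hf.2 (Set.mem_univ (x + s • d)) (Set.mem_univ (x + t • d)) ha hb hab
    simpa [smul_eq_mul, h2] using this
  have hD : HasFDerivAt f (InnerProductSpace.toDual ℝ E g) x :=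
    hasGradientAt_iff_hasFDerivAt.mp h
  have hc : HasDerivAt (fun t : ℝ => x + t • d) d 0 := by
    simpa using ((hasDerivAt_id (0:ℝ)).smul_const d).const_add x
  have hx0 : x + (0:ℝ) • d = x := by simp
  have hder : HasDerivAt (fun t : ℝ => f (x + t • d)) ⟪g, d⟫ 0 := by
    have hD' : HasFDerivAt f (InnerProductSpace.toDual ℝ E g) (x + (0:ℝ) • d) := by
      rw [hx0]; exact hD
    have := hD'.comp_hasDerivAt (0:ℝ) hc
    simpa [InnerProductSpace.toDual_apply_apply, Function.comp_def] using this
  have hslope := hφ.le_slope_of_hasDerivAt (Set.mem_univ (0:ℝ)) (Set.mem_univ (1:ℝ))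
    zero_lt_one hder
  have h1 : x + (1:ℝ) • d = y := by rw [one_smul, hd]; abel
  rw [slope_def_field] at hslope
  have hxy : x + d = y := by rw [hd]; abel
  simp [hx0, h1, hxy] at hslope
  linarith

lemma aux_grad_eq {E : Type*} [NormedAddCommGroup E] [InnerProductSpace ℝ E] [CompleteSpace E]
    (f : E → ℝ) {x g s : E} (h : HasGradientAt f g x)
    (hs : ∀ u, f x + ⟪s, u - x⟫ ≤ f u) : g = s := by
  set ψ : E → ℝ := fun u => f u - ⟪s, u⟫ with hψ
  have hmin : IsLocalMin ψ x := by
    apply Filter.Eventually.of_forall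
    intro u
    have := hs u
    simp only [hψ, inner_sub_right] at this ⊢
    linarith [this, inner_sub_right (𝕜 := ℝ) s u x]
  have hDf : HasFDerivAt f (InnerProductSpace.toDual ℝ E g) x :=
    hasGradientAt_iff_hasFDerivAt.mp h
  have hDi : HasFDerivAt (fun u : E => ⟪s, u⟫) (innerSL ℝ s) x :=
    (innerSL ℝ s).hasFDerivAt
  have hDψ : HasFDerivAt ψ (InnerProductSpace.toDual ℝ E g - innerSL ℝ s) x := hDf.sub hDi
  have h0 := hmin.hasFDerivAt_eq_zero hDψ
  have hall : ∀ v : E, ⟪g, v⟫ = ⟪s, v⟫ := by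
    intro v
    have := congrFun (congrArg DFunLike.coe h0) v
    simpa [sub_eq_zero, InnerProductSpace.toDual_apply_apply] using this
  exact ext_inner_right ℝ hall



lemma aux_exists_subgradient {E : Type*} [NormedAddCommGroup E] [InnerProductSpace ℝ E]
    [FiniteDimensional ℝ E] (f : E → ℝ) (hf : ConvexOn ℝ Set.univ f) (x : E) :
    ∃ g : E, ∀ y, f x + ⟪g, y - x⟫ ≤ f y := by
  have hcont : Continuous f := by
    have h := ConvexOn.continuousOn isOpen_univ hf
    exact continuousOn_univ.mp h
  set s : Set (E × ℝ) := {p | f p.1 < p.2} with hs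
  have hsopen : IsOpen s := isOpen_lt (hcont.comp continuous_fst) continuous_snd
  have hsconv : Convex ℝ s := by
    intro p hp q hq a b ha hb hab
    simp only [hs, Set.mem_setOf_eq] at hp hq ⊢
    have hle : f (a • p.1 + b • q.1) ≤ a * f p.1 + b * f q.1 := by
      simpa [smul_eq_mul] using hf.2 (Set.mem_univ p.1) (Set.mem_univ q.1) ha hb hab
    have hcomb : (a • p + b • q).1 = a • p.1 + b • q.1 := rfl
    have hcomb2 : (a • p + b • q).2 = a * p.2 + b * q.2 := rfl
    rw [hcomb, hcomb2]
    rcases eq_or_lt_of_le ha with h0 | h0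
    · have hb1 : b = 1 := by linarith
      simp [← h0, hb1] at hle ⊢
      linarith
    · have h1 : a * f p.1 < a * p.2 := by exact (mul_lt_mul_iff_right₀ h0).2 hp
      have h2 : b * f q.1 ≤ b * q.2 := mul_le_mul_of_nonneg_left hq.le hb
      linarith
  have hxs : (x, f x) ∉ s := by simp [hs]
  obtain ⟨φ, hφ⟩ := geometric_hahn_banach_open_point hsconv hsopen hxs
  set β : ℝ := φ (0, 1) with hβdef
  set ψ : E → ℝ := fun w => φ (w, 0) with hψdef
  have hdecomp : ∀ (w : E) (r : ℝ), φ (w, r) = ψ w + r * β := by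
    intro w r
    have : (w, r) = (w, (0:ℝ)) + r • ((0:E), (1:ℝ)) := by
      simp [Prod.ext_iff]
    rw [this, map_add, map_smul]
    simp [hψdef, hβdef, smul_eq_mul]
  have key : ∀ (w : E) (r : ℝ), f w < r → ψ w + r * β < ψ x + f x * β := by
    intro w r hr
    have := hφ (w, r) hr
    rwa [hdecomp, hdecomp] at this
  have hβ : β < 0 := by
    have := key x (f x + 1) (lt_add_one _)
    nlinarith
  have key2 : ∀ w, ψ w + f w * β ≤ ψ x + f x * β := by
    intro w
    by_contra hlt
    push_neg at hlt
    set δ := ψ w + f w * β - (ψ x + f x * β) with hδ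
    have hδpos : 0 < δ := by simp [hδ]; linarith
    have hnegβ : 0 < -β := neg_pos.mpr hβ
    have hεpos : 0 < δ / (-β) / 2 := div_pos (div_pos hδpos hnegβ) two_pos
    have hkey := key w (f w + δ / (-β) / 2) (by linarith)
    have hb1 : (-β) * (-β)⁻¹ = 1 := mul_inv_cancel₀ (ne_of_gt hnegβ)
    have hmul : (δ / (-β) / 2) * β = -(δ / 2) := by
      linear_combination (-δ / 2) * hb1
    nlinarith
  set ℓ : E →L[ℝ] ℝ := φ.comp (ContinuousLinearMap.inl ℝ E ℝ) with hℓ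
  have hℓapp : ∀ w, ℓ w = ψ w := by intro w; rfl
  refine ⟨(InnerProductSpace.toDual ℝ E).symm ((-β)⁻¹ • ℓ), fun y => ?_⟩
  have hinner : ⟪(InnerProductSpace.toDual ℝ E).symm ((-β)⁻¹ • ℓ), y - x⟫
      = (-β)⁻¹ * (ψ y - ψ x) := by
    rw [InnerProductSpace.toDual_symm_apply]
    simp [hℓapp, map_sub]
    ring
  rw [hinner]
  have h2 := key2 y
  have hnegβ : 0 < -β := neg_pos.mpr hβ
  have h3 : (0:ℝ) < (-β)⁻¹ := inv_pos.mpr hnegβ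
  have h4 : (-β)⁻¹ * (ψ y + f y * β) ≤ (-β)⁻¹ * (ψ x + f x * β) :=
    mul_le_mul_of_nonneg_left h2 h3.le
  have hb1 : (-β) * (-β)⁻¹ = 1 := mul_inv_cancel₀ (ne_of_gt hnegβ)
  have h5 : (-β)⁻¹ * β = -1 := by linear_combination (-1 : ℝ) * hb1
  have e1 : (-β)⁻¹ * (ψ y + f y * β) = (-β)⁻¹ * ψ y - f y := by
    linear_combination f y * h5
  have e2 : (-β)⁻¹ * (ψ x + f x * β) = (-β)⁻¹ * ψ x - f x := by
    linear_combination f x * h5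
  rw [e1, e2] at h4
  linarith

lemma aux_exists_multiplier {E F : Type*}
    [NormedAddCommGroup E] [InnerProductSpace ℝ E] [FiniteDimensional ℝ E]
    [NormedAddCommGroup F] [InnerProductSpace ℝ F] [FiniteDimensional ℝ F]
    (f₁ : F → ℝ) (hf₁ : ConvexOn ℝ Set.univ f₁)
    (f₂ : E → ℝ) (hf₂ : ConvexOn ℝ Set.univ f₂)
    (B : E →L[ℝ] F) (us : E)
    (hopt : ∀ u, f₁ (B us) + f₂ us ≤ f₁ (B u) + f₂ u) :
    ∃ g : F, (∀ z, f₁ (B us) + ⟪g, z - B us⟫ ≤ f₁ z) ∧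
      (∀ u, f₂ us + ⟪g, B us - B u⟫ ≤ f₂ u) := by
  set m : ℝ := f₁ (B us) + f₂ us with hm
  set X : F → E → ℝ := fun w u => f₁ (B u + w) + f₂ u with hX
  have hXlb : ∀ w u, 2 * m - (f₁ (B us - w) + f₂ us) ≤ X w u := by
    intro w u
    set p : E := (1/2 : ℝ) • u + (1/2 : ℝ) • us with hp
    have hBp : B p = (1/2 : ℝ) • (B u + w) + (1/2 : ℝ) • (B us - w) := by
      simp only [hp, map_add, map_smul]
      module
    have hA : f₁ (B p) ≤ 1/2 * f₁ (B u + w) + 1/2 * f₁ (B us - w) := by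
      rw [hBp]
      simpa [smul_eq_mul] using
        hf₁.2 (Set.mem_univ (B u + w)) (Set.mem_univ (B us - w))
          (by norm_num) (by norm_num) (by norm_num)
    have hB2 : f₂ p ≤ 1/2 * f₂ u + 1/2 * f₂ us := by
      rw [hp]
      simpa [smul_eq_mul] using
        hf₂.2 (Set.mem_univ u) (Set.mem_univ us) (by norm_num) (by norm_num) (by norm_num)
    have := hopt p
    simp only [hX]
    linarith
  have hbdd : ∀ w, BddBelow (Set.range (X w)) := by
    intro w
    exact ⟨2 * m - (f₁ (B us - w) + f₂ us), by rintro r ⟨u, rfl⟩; exact hXlb w u⟩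
  set h : F → ℝ := fun w => ⨅ u, X w u with hh
  have hle : ∀ w u, h w ≤ X w u := fun w u => ciInf_le (hbdd w) u
  have h0 : h 0 = m := by
    apply le_antisymm
    · have := hle 0 us
      simpa [hX] using this
    · apply le_ciInf
      intro u
      have := hopt u
      simpa [hX] using this
  have hconv : ConvexOn ℝ Set.univ h := by
    refine ⟨convex_univ, ?_⟩
    intro w₁ _ w₂ _ a b ha hb hab
    rcases eq_or_lt_of_le ha with h0a | h0a
    · have hb1 : b = 1 := by linarith
      simp [← h0a, hb1]
    rcases eq_or_lt_of_le hb with h0b | h0b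
    · have ha1 : a = 1 := by linarith
      simp [← h0b, ha1]
    have key : ∀ ε > 0, h (a • w₁ + b • w₂) ≤ a * h w₁ + b * h w₂ + ε := by
      intro ε hε
      obtain ⟨u₁, hu₁⟩ := exists_lt_of_ciInf_lt (show h w₁ < h w₁ + ε by linarith)
      obtain ⟨u₂, hu₂⟩ := exists_lt_of_ciInf_lt (show h w₂ < h w₂ + ε by linarith)
      have hcomb : h (a • w₁ + b • w₂) ≤ X (a • w₁ + b • w₂) (a • u₁ + b • u₂) :=
        hle _ _
      have heq : B (a • u₁ + b • u₂) + (a • w₁ + b • w₂)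
          = a • (B u₁ + w₁) + b • (B u₂ + w₂) := by
        simp only [map_add, map_smul]
        module
      have hf1c : f₁ (B (a • u₁ + b • u₂) + (a • w₁ + b • w₂))
          ≤ a * f₁ (B u₁ + w₁) + b * f₁ (B u₂ + w₂) := by
        rw [heq]
        simpa [smul_eq_mul] using
          hf₁.2 (Set.mem_univ (B u₁ + w₁)) (Set.mem_univ (B u₂ + w₂)) ha hb hab
      have hf2c : f₂ (a • u₁ + b • u₂) ≤ a * f₂ u₁ + b * f₂ u₂ := by
        simpa [smul_eq_mul] using
          hf₂.2 (Set.mem_univ u₁) (Set.mem_univ u₂) ha hb hab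
      have e1 : a * (X w₁ u₁) < a * (h w₁ + ε) := (mul_lt_mul_iff_right₀ h0a).2 hu₁
      have e2 : b * (X w₂ u₂) < b * (h w₂ + ε) := (mul_lt_mul_iff_right₀ h0b).2 hu₂
      simp only [hX] at hcomb hu₁ hu₂ e1 e2 ⊢
      nlinarith
    have := le_of_forall_pos_le_add key
    simpa [smul_eq_mul] using this
  obtain ⟨g, hg⟩ := aux_exists_subgradient h hconv 0
  have master : ∀ (z : F) (u : E), m + ⟪g, z - B u⟫ ≤ f₁ z + f₂ u := by
    intro z u
    have h1 := hg (z - B u)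
    rw [h0] at h1
    simp only [sub_zero] at h1
    have h2 := hle (z - B u) u
    have h3 : X (z - B u) u = f₁ z + f₂ u := by simp [hX]
    rw [h3] at h2
    linarith
  refine ⟨g, ?_, ?_⟩
  · intro z
    have := master z us
    simp only [hm] at this ⊢
    linarith
  · intro u
    have := master (B us) u
    simp only [hm] at this ⊢
    linarith

lemma aux_prox_iff {F : Type*} [NormedAddCommGroup F] [InnerProductSpace ℝ F]
    (f₁ : F → ℝ) (hf₁ : ConvexOn ℝ Set.univ f₁) (lam : ℝ) (hlam : 0 < lam) (w p : F) :
    (∀ z, (1/lam) * f₁ p + (1/2) * ‖p - w‖^2 ≤ (1/lam) * f₁ z + (1/2) * ‖z - w‖^2)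
    ↔ (∀ z, f₁ p + lam * ⟪w - p, z - p⟫ ≤ f₁ z) := by
  constructor
  · intro H z
    apply le_of_forall_pos_le_add
    intro ε hε
    set S : ℝ := ‖z - p‖^2 with hS
    have hSnn : 0 ≤ S := by positivity
    set t : ℝ := min 1 (ε / (lam * (S + 1))) with ht
    have hD : 0 < lam * (S + 1) := by positivity
    have htpos : 0 < t := lt_min one_pos (div_pos hε hD)
    have htle1 : t ≤ 1 := min_le_left _ _
    have htle : t ≤ ε / (lam * (S + 1)) := min_le_right _ _
    have htmul : t * (lam * (S + 1)) ≤ ε := (le_div_iff₀ hD).mp htle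
    set zt : F := p + t • (z - p) with hzt
    have hztw : zt - w = (p - w) + t • (z - p) := by rw [hzt]; abel
    have hnorm : ‖zt - w‖^2 = ‖p - w‖^2 + 2 * (t * ⟪p - w, z - p⟫) + t^2 * S := by
      rw [hztw, norm_add_sq_real, real_inner_smul_right, norm_smul]
      simp only [Real.norm_eq_abs, abs_of_pos htpos, hS]
      ring
    have hztcomb : zt = (1 - t) • p + t • z := by rw [hzt]; module
    have hconvf : f₁ zt ≤ (1 - t) * f₁ p + t * f₁ z := by
      rw [hztcomb]
      simpa [smul_eq_mul] using
        hf₁.2 (Set.mem_univ p) (Set.mem_univ z) (by linarith) htpos.le (by ring)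
    have H' := H zt
    rw [hnorm] at H'
    have e1 : lam * ((1/lam) * f₁ p + (1/2) * ‖p - w‖^2)
        = f₁ p + lam/2 * ‖p - w‖^2 := by field_simp
    have e2 : lam * ((1/lam) * f₁ zt + (1/2) * (‖p - w‖^2 + 2 * (t * ⟪p - w, z - p⟫) + t^2 * S))
        = f₁ zt + lam/2 * (‖p - w‖^2 + 2 * (t * ⟪p - w, z - p⟫) + t^2 * S) := by
      field_simp
    have H2 := mul_le_mul_of_nonneg_left H' hlam.le
    rw [e1, e2] at H2
    set I : ℝ := ⟪p - w, z - p⟫ with hI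
    have hIw : ⟪w - p, z - p⟫ = -I := by
      rw [hI, ← neg_sub p w, inner_neg_left]
    rw [hIw]
    -- from H2 and hconvf : t * (f₁ p - f₁ z) ≤ t * (lam * I + lam * t / 2 * S)
    have hd : t * (f₁ p - f₁ z) ≤ t * (lam * I + lam * t / 2 * S) := by nlinarith
    have hdiv : f₁ p - f₁ z ≤ lam * I + lam * t / 2 * S :=
      le_of_mul_le_mul_left (by linarith [hd]) htpos
    have hbound : lam * t / 2 * S ≤ ε := by nlinarith
    linarith
  · intro H z
    have hsub := H z
    have hzw : z - w = (z - p) + (p - w) := by abel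
    have hnorm : ‖z - w‖^2 = ‖z - p‖^2 + 2 * ⟪z - p, p - w⟫ + ‖p - w‖^2 := by
      rw [hzw, norm_add_sq_real]
    have hIc : ⟪z - p, p - w⟫ = -⟪w - p, z - p⟫ := by
      rw [real_inner_comm, ← neg_sub p w, inner_neg_left, neg_neg]
    have hinv : (1/lam) * lam = 1 := by field_simp
    have hmul := mul_le_mul_of_nonneg_left hsub (by positivity : (0:ℝ) ≤ 1/lam)
    have e3 : (1/lam) * (f₁ p + lam * ⟪w - p, z - p⟫)
        = (1/lam) * f₁ p + ⟪w - p, z - p⟫ := by field_simp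
    rw [e3] at hmul
    have hSnn : (0:ℝ) ≤ ‖z - p‖^2 := by positivity
    rw [hnorm, hIc]
    linarith

/-- (Theorem 1) `u*` solves `min_u f₁(Bu) + f₂(u)` iff there exists `v*` with
`v* = T₁(v*, u*)` and `u* = T₂(v*, u*)`, i.e. `(v*, u*)` is a fixed point of `T`. -/
theorem solution_iff_fixed_point_of_T (N M : ℕ)
    (f₁ : EuclideanSpace ℝ (Fin M) → ℝ) (hf₁ : ConvexOn ℝ Set.univ f₁)
    (f₂ : EuclideanSpace ℝ (Fin N) → ℝ) (hf₂ : ConvexOn ℝ Set.univ f₂)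
    (gradf₂ : EuclideanSpace ℝ (Fin N) → EuclideanSpace ℝ (Fin N))
    (hgrad : ∀ u, HasGradientAt f₂ (gradf₂ u) u)
    (B : EuclideanSpace ℝ (Fin N) →L[ℝ] EuclideanSpace ℝ (Fin M))
    (Badj : EuclideanSpace ℝ (Fin M) →L[ℝ] EuclideanSpace ℝ (Fin N))
    (hadj : ∀ (x : EuclideanSpace ℝ (Fin N)) (y : EuclideanSpace ℝ (Fin M)),
      ⟪B x, y⟫ = ⟪x, Badj y⟫)
    (Q Qinv : EuclideanSpace ℝ (Fin N) →L[ℝ] EuclideanSpace ℝ (Fin N))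
    (hQsymm : ∀ x y : EuclideanSpace ℝ (Fin N), ⟪Q x, y⟫ = ⟪x, Q y⟫)
    (hQpos : ∀ x : EuclideanSpace ℝ (Fin N), x ≠ 0 → 0 < ⟪x, Q x⟫)
    (hQinv₁ : ∀ x, Qinv (Q x) = x) (hQinv₂ : ∀ x, Q (Qinv x) = x)
    (lam : ℝ) (hlam : 0 < lam)
    (prox : EuclideanSpace ℝ (Fin M) → EuclideanSpace ℝ (Fin M))
    (hprox : ∀ w p, prox w = p ↔
      ∀ z : EuclideanSpace ℝ (Fin M),
        (1 / lam) * f₁ p + (1 / 2) * ‖p - w‖ ^ 2 ≤ (1 / lam) * f₁ z + (1 / 2) * ‖z - w‖ ^ 2)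
    (T1 : EuclideanSpace ℝ (Fin M) → EuclideanSpace ℝ (Fin N) → EuclideanSpace ℝ (Fin M))
    (hT1 : ∀ v u, T1 v u =
      (B (u - Qinv (gradf₂ u)) + (v - lam • B (Qinv (Badj v))))
        - prox (B (u - Qinv (gradf₂ u)) + (v - lam • B (Qinv (Badj v)))))
    (T2 : EuclideanSpace ℝ (Fin M) → EuclideanSpace ℝ (Fin N) → EuclideanSpace ℝ (Fin N))
    (hT2 : ∀ v u, T2 v u = u - Qinv (gradf₂ u) - lam • Qinv (Badj (T1 v u)))
    (us : EuclideanSpace ℝ (Fin N)) :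
    (∀ u : EuclideanSpace ℝ (Fin N), f₁ (B us) + f₂ us ≤ f₁ (B u) + f₂ u) ↔
      ∃ vs : EuclideanSpace ℝ (Fin M), T1 vs us = vs ∧ T2 vs us = us := by
  have hQinv_inj : ∀ x y, Qinv x = Qinv y → x = y := by
    intro x y hxy
    rw [← hQinv₂ x, ← hQinv₂ y, hxy]
  -- key algebraic identity, valid whenever gradf₂ us = -(lam • Badj vs)
  have hkey : ∀ vs : EuclideanSpace ℝ (Fin M), gradf₂ us = -(lam • Badj vs) →
      B (us - Qinv (gradf₂ us)) + (vs - lam • B (Qinv (Badj vs))) = B us + vs := by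
    intro vs hgv
    rw [hgv]
    simp only [map_neg, map_smul, map_sub]
    abel
  constructor
  · intro hopt
    obtain ⟨g, hg1, hg2⟩ := aux_exists_multiplier f₁ hf₁ f₂ hf₂ B us hopt
    have hgrad_eq : gradf₂ us = -(Badj g) := by
      apply aux_grad_eq f₂ (hgrad us)
      intro u
      have he : ⟪g, B us - B u⟫ = ⟪-(Badj g), u - us⟫ := by
        calc ⟪g, B us - B u⟫ = ⟪B (us - u), g⟫ := by
              rw [← map_sub]; exact real_inner_comm _ _
          _ = ⟪us - u, Badj g⟫ := hadj _ _
          _ = ⟪-(Badj g), u - us⟫ := by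
              have hsw : us - u = -(u - us) := by abel
              rw [hsw, inner_neg_left, inner_neg_left, real_inner_comm]
      have := hg2 u
      rw [he] at this
      exact this
    have hlg : lam • ((1/lam) • g) = g := by
      rw [smul_smul, mul_one_div_cancel hlam.ne', one_smul]
    have hgv : gradf₂ us = -(lam • Badj ((1/lam) • g)) := by
      rw [← map_smul, hlg, hgrad_eq]
    have hproxeq : prox (B us + (1/lam) • g) = B us := by
      rw [hprox]
      rw [aux_prox_iff f₁ hf₁ lam hlam]
      intro z
      have he : lam * ⟪B us + (1/lam) • g - B us, z - B us⟫ = ⟪g, z - B us⟫ := by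
        rw [add_sub_cancel_left, real_inner_smul_left]
        field_simp
      rw [he]
      exact hg1 z
    have hT1fix : T1 ((1/lam) • g) us = (1/lam) • g := by
      rw [hT1, hkey _ hgv, hproxeq]
      abel
    have hT2fix : T2 ((1/lam) • g) us = us := by
      rw [hT2, hT1fix, hgv]
      simp only [map_neg, map_smul]
      abel
    exact ⟨(1/lam) • g, hT1fix, hT2fix⟩
  · rintro ⟨vs, h1, h2⟩
    -- extract gradient relation
    have hgv : gradf₂ us = -(lam • Badj vs) := by
      have h2' := h2
      rw [hT2, h1] at h2'
      rw [sub_sub, sub_eq_self] at h2'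
      have e0 : Qinv (gradf₂ us + lam • Badj vs) = Qinv 0 := by
        rw [map_add, map_smul, h2', map_zero]
      have := hQinv_inj _ _ e0
      exact eq_neg_of_add_eq_zero_left this
    -- extract prox relation
    have hP : prox (B us + vs) = B us := by
      have h1' := h1
      rw [hT1, hkey _ hgv] at h1'
      have h3 : B us + vs = vs + prox (B us + vs) := sub_eq_iff_eq_add.mp h1'
      have h4 : vs + prox (B us + vs) = vs + B us := by rw [← h3]; abel
      exact add_left_cancel h4
    have hsub := (aux_prox_iff f₁ hf₁ lam hlam (B us + vs) (B us)).mp ((hprox _ _).mp hP)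
    intro u
    have hgineq := aux_grad_ineq f₂ hf₂ (hgrad us) u
    have h1' := hsub (B u)
    rw [add_sub_cancel_left] at h1'
    have he : ⟪vs, B u - B us⟫ = ⟪Badj vs, u - us⟫ := by
      calc ⟪vs, B u - B us⟫ = ⟪B (u - us), vs⟫ := by
            rw [← map_sub]; exact real_inner_comm _ _
        _ = ⟪u - us, Badj vs⟫ := hadj _ _
        _ = ⟪Badj vs, u - us⟫ := real_inner_comm _ _
    have hc : lam * ⟪vs, B u - B us⟫ + ⟪gradf₂ us, u - us⟫ = 0 := by
      rw [hgv, inner_neg_left, real_inner_smul_left, he]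
      ring
    linarith
end

section
/- Let f₂ : ℝ^N → ℝ be differentiable with gradient ∇f₂ satisfying the co-coercivity inequality ⟨∇f₂(v) − ∇f₂(w), v − w⟩ ≥ β‖∇f₂(v) − ∇f₂(w)‖² for all v, w ∈ ℝ^N and some β > 0, and let Q be a symmetric positive definite linear map on ℝ^N with inverse Q⁻¹. Define h(u) = u − Q⁻¹∇f₂(u). Then for all u₁, u₂ ∈ ℝ^N: ‖h(u₁) − h(u₂)‖²_Q ≤ ‖u₁ − u₂‖²_Q − (2β‖∇f₂(u₁) − ∇f₂(u₂)‖² − ⟨∇f₂(u₁) − ∇f₂(u₂), Q⁻¹(∇f₂(u₁) − ∇f₂(u₂))⟩). -/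
open scoped RealInnerProductSpace

/-- For `h(u) = u − Q⁻¹∇f₂(u)` with `∇f₂` co-coercive with constant `β` and `Q`
symmetric positive definite:
`‖h(u₁) − h(u₂)‖²_Q ≤ ‖u₁ − u₂‖²_Q − (2β‖Δg‖² − ⟨Δg, Q⁻¹Δg⟩)` where
`Δg = ∇f₂(u₁) − ∇f₂(u₂)`. -/
theorem h_contraction_estimate (N : ℕ)
    (f₂ : EuclideanSpace ℝ (Fin N) → ℝ)
    (gradf₂ : EuclideanSpace ℝ (Fin N) → EuclideanSpace ℝ (Fin N))
    (hgrad : ∀ u, HasGradientAt f₂ (gradf₂ u) u)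
    (β : ℝ) (hβ : 0 < β)
    (hcoco : ∀ v w : EuclideanSpace ℝ (Fin N),
      β * ‖gradf₂ v - gradf₂ w‖ ^ 2 ≤ ⟪gradf₂ v - gradf₂ w, v - w⟫)
    (Q Qinv : EuclideanSpace ℝ (Fin N) →L[ℝ] EuclideanSpace ℝ (Fin N))
    (hQsymm : ∀ x y : EuclideanSpace ℝ (Fin N), ⟪Q x, y⟫ = ⟪x, Q y⟫)
    (hQpos : ∀ x : EuclideanSpace ℝ (Fin N), x ≠ 0 → 0 < ⟪x, Q x⟫)
    (hQinv₁ : ∀ x, Qinv (Q x) = x) (hQinv₂ : ∀ x, Q (Qinv x) = x)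
    (u₁ u₂ : EuclideanSpace ℝ (Fin N)) :
    ⟪(u₁ - Qinv (gradf₂ u₁)) - (u₂ - Qinv (gradf₂ u₂)),
        Q ((u₁ - Qinv (gradf₂ u₁)) - (u₂ - Qinv (gradf₂ u₂)))⟫
      ≤ ⟪u₁ - u₂, Q (u₁ - u₂)⟫
        - (2 * β * ‖gradf₂ u₁ - gradf₂ u₂‖ ^ 2
            - ⟪gradf₂ u₁ - gradf₂ u₂, Qinv (gradf₂ u₁ - gradf₂ u₂)⟫) := by
  set d := u₁ - u₂ with hd
  set g := gradf₂ u₁ - gradf₂ u₂ with hg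
  have hdiff : (u₁ - Qinv (gradf₂ u₁)) - (u₂ - Qinv (gradf₂ u₂)) = d - Qinv g := by
    simp [hd, hg, map_sub]; abel
  rw [hdiff]
  have hexp : ⟪d - Qinv g, Q (d - Qinv g)⟫
      = ⟪d, Q d⟫ - 2 * ⟪g, d⟫ + ⟪g, Qinv g⟫ := by
    rw [inner_sub_left, map_sub, inner_sub_right, inner_sub_right,
      hQinv₂, ← hQsymm (Qinv g) d, hQinv₂]
    rw [real_inner_comm (Qinv g) g, real_inner_comm d g]
    ring
  rw [hexp]
  have := hcoco u₁ u₂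
  nlinarith [this]
end

section
/- Assume additionally that the operator norm of Q⁻¹ satisfies ‖Q⁻¹‖₂ ≤ 2β (equivalently 2βI − Q⁻¹ is positive semidefinite). Then the operator T is nonexpansive with respect to ‖·‖_{λ,Q}: for all w₁, w₂ ∈ ℝ^M × ℝ^N, ‖T(w₁) − T(w₂)‖_{λ,Q} ≤ ‖w₁ − w₂‖_{λ,Q}. -/
open scoped RealInnerProductSpace

-- variational inequality from prox minimality
lemma prox_vi {m : ℕ} (f : EuclideanSpace ℝ (Fin m) → ℝ) (hf : ConvexOn ℝ Set.univ f)
    (c : ℝ) (hc : 0 ≤ c) (w p : EuclideanSpace ℝ (Fin m))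
    (hmin : ∀ z, c * f p + (1/2) * ‖p - w‖ ^ 2 ≤ c * f z + (1/2) * ‖z - w‖ ^ 2)
    (z : EuclideanSpace ℝ (Fin m)) :
    0 ≤ c * (f z - f p) + ⟪p - w, z - p⟫ := by
  set d := z - p with hd
  have key : ∀ s : ℝ, 0 < s → s ≤ 1 →
      0 ≤ c * (f z - f p) + ⟪p - w, d⟫ + s/2 * ‖d‖^2 := by
    intro s hs hs1
    have hzs := hmin (p + s • d)
    have hpt : (1 - s) • p + s • z = p + s • d := by
      rw [hd]; module
    have hconv : f (p + s • d) ≤ (1 - s) * f p + s * f z := by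
      have := hf.2 (Set.mem_univ p) (Set.mem_univ z)
        (show (0:ℝ) ≤ 1 - s by linarith) hs.le
        (show (1 - s) + s = 1 by ring)
      simp only [smul_eq_mul] at this
      rwa [hpt] at this
    have hnorm : ‖p + s • d - w‖^2 = ‖p - w‖^2 + 2 * (s * ⟪p - w, d⟫) + s^2 * ‖d‖^2 := by
      have h0 : p + s • d - w = (p - w) + s • d := by abel
      rw [h0, norm_add_sq_real, real_inner_smul_right, norm_smul]
      rw [Real.norm_eq_abs, abs_of_pos hs]
      ring
    have h1 : 0 ≤ s * (c * (f z - f p) + ⟪p - w, d⟫ + s/2 * ‖d‖^2) := by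
      have h2 := mul_le_mul_of_nonneg_left hconv hc
      nlinarith [hzs, h2, hnorm]
    exact (mul_nonneg_iff_of_pos_left hs).mp h1
  by_contra hneg
  push_neg at hneg
  set a := c * (f z - f p) + ⟪p - w, d⟫ with ha
  have hden : (0:ℝ) < ‖d‖^2 + 1 := by positivity
  have hapos : (0:ℝ) < -a := by linarith
  set s := min 1 (-a / (‖d‖^2 + 1)) with hs
  have hspos : 0 < s := lt_min one_pos (div_pos hapos hden)
  have hs1 : s ≤ 1 := min_le_left _ _
  have h2 : s ≤ -a / (‖d‖^2 + 1) := min_le_right _ _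
  have hkey := key s hspos hs1
  have h3 : s * (‖d‖^2 + 1) ≤ -a := by
    rw [← le_div_iff₀ hden]; exact h2
  nlinarith [hkey, h3, hspos, hneg]

-- firm nonexpansiveness of prox
lemma prox_firm {m : ℕ} (f : EuclideanSpace ℝ (Fin m) → ℝ) (hf : ConvexOn ℝ Set.univ f)
    (c : ℝ) (hc : 0 ≤ c) (w₁ w₂ p₁ p₂ : EuclideanSpace ℝ (Fin m))
    (hmin₁ : ∀ z, c * f p₁ + (1/2) * ‖p₁ - w₁‖ ^ 2 ≤ c * f z + (1/2) * ‖z - w₁‖ ^ 2)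
    (hmin₂ : ∀ z, c * f p₂ + (1/2) * ‖p₂ - w₂‖ ^ 2 ≤ c * f z + (1/2) * ‖z - w₂‖ ^ 2) :
    ‖p₁ - p₂‖^2 ≤ ⟪w₁ - w₂, p₁ - p₂⟫ := by
  have h1 := prox_vi f hf c hc w₁ p₁ hmin₁ p₂
  have h2 := prox_vi f hf c hc w₂ p₂ hmin₂ p₁
  have flip : ⟪p₁ - w₁, p₂ - p₁⟫ = - ⟪p₁ - w₁, p₁ - p₂⟫ := by
    rw [← inner_neg_right]; congr 1; abel
  have e1 : ⟪p₂ - w₂, p₁ - p₂⟫ - ⟪p₁ - w₁, p₁ - p₂⟫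
      = ⟪w₁ - w₂, p₁ - p₂⟫ - ⟪p₁ - p₂, p₁ - p₂⟫ := by
    rw [← inner_sub_left, ← inner_sub_left]; congr 1; abel
  have e2 : ⟪p₁ - p₂, p₁ - p₂⟫ = ‖p₁ - p₂‖^2 := real_inner_self_eq_norm_sq _
  linarith [h1, h2, flip, e1, e2]

-- spectral bound for symmetric operator
lemma quadform_le_lmax {n : ℕ} (K : EuclideanSpace ℝ (Fin n) →L[ℝ] EuclideanSpace ℝ (Fin n))
    (hsym : ∀ x y, ⟪K x, y⟫ = ⟪x, K y⟫) (lmax : ℝ)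
    (hub : ∀ μ : ℝ, Module.End.HasEigenvalue K.toLinearMap μ → μ ≤ lmax)
    (x : EuclideanSpace ℝ (Fin n)) :
    ⟪x, K x⟫ ≤ lmax * ‖x‖^2 := by
  have hsym' : (K.toLinearMap).IsSymmetric := fun a b => hsym a b
  have hn : Module.finrank ℝ (EuclideanSpace ℝ (Fin n)) = n := finrank_euclideanSpace_fin
  set b := hsym'.eigenvectorBasis hn with hb
  set μ := hsym'.eigenvalues hn with hμ
  have hKb : ∀ i, K (b i) = μ i • b i := fun i => hsym'.apply_eigenvectorBasis hn i
  have hμle : ∀ i, μ i ≤ lmax := fun i => hub _ (hsym'.hasEigenvalue_eigenvalues hn i)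
  have h1 : ⟪x, K x⟫ = ∑ i, μ i * (⟪x, b i⟫ * ⟪b i, x⟫) := by
    rw [← b.sum_inner_mul_inner x (K x)]
    congr 1; funext i
    have : ⟪b i, K x⟫ = μ i * ⟪b i, x⟫ := by
      rw [← hsym (b i) x, hKb i, real_inner_smul_left]
    rw [this]; ring
  have h2 : ‖x‖^2 = ∑ i, ⟪x, b i⟫ * ⟪b i, x⟫ := by
    rw [b.sum_inner_mul_inner x x, real_inner_self_eq_norm_sq]
  rw [h1, h2, Finset.mul_sum]
  apply Finset.sum_le_sum
  intro i _
  have hnn : 0 ≤ ⟪x, b i⟫ * ⟪b i, x⟫ := by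
    rw [real_inner_comm (b i) x]; exact mul_self_nonneg _
  exact mul_le_mul_of_nonneg_right (hμle i) hnn
set_option maxHeartbeats 1000000 in
/-- If moreover `‖Q⁻¹‖₂ ≤ 2β`, the operator `T` is nonexpansive in the norm
`‖(v,u)‖_{λ,Q} = √(‖u‖²_Q + λ‖v‖²)`. -/
theorem T_nonexpansive (N M : ℕ)
    (f₁ : EuclideanSpace ℝ (Fin M) → ℝ) (hf₁ : ConvexOn ℝ Set.univ f₁)
    (f₂ : EuclideanSpace ℝ (Fin N) → ℝ) (hf₂ : ConvexOn ℝ Set.univ f₂)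
    (gradf₂ : EuclideanSpace ℝ (Fin N) → EuclideanSpace ℝ (Fin N))
    (hgrad : ∀ u, HasGradientAt f₂ (gradf₂ u) u)
    (B : EuclideanSpace ℝ (Fin N) →L[ℝ] EuclideanSpace ℝ (Fin M))
    (Badj : EuclideanSpace ℝ (Fin M) →L[ℝ] EuclideanSpace ℝ (Fin N))
    (hadj : ∀ (x : EuclideanSpace ℝ (Fin N)) (y : EuclideanSpace ℝ (Fin M)),
      ⟪B x, y⟫ = ⟪x, Badj y⟫)
    (Q Qinv : EuclideanSpace ℝ (Fin N) →L[ℝ] EuclideanSpace ℝ (Fin N))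
    (hQsymm : ∀ x y : EuclideanSpace ℝ (Fin N), ⟪Q x, y⟫ = ⟪x, Q y⟫)
    (hQpos : ∀ x : EuclideanSpace ℝ (Fin N), x ≠ 0 → 0 < ⟪x, Q x⟫)
    (hQinv₁ : ∀ x, Qinv (Q x) = x) (hQinv₂ : ∀ x, Q (Qinv x) = x)
    (lam : ℝ) (hlam : 0 < lam)
    (β : ℝ) (hβ : 0 < β)
    (hcoco : ∀ v w : EuclideanSpace ℝ (Fin N),
      β * ‖gradf₂ v - gradf₂ w‖ ^ 2 ≤ ⟪gradf₂ v - gradf₂ w, v - w⟫)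
    (lmax : ℝ)
    (hlmax : IsGreatest
      {μ : ℝ | Module.End.HasEigenvalue ((B.comp (Qinv.comp Badj)).toLinearMap) μ} lmax)
    (hlam2 : lam ≤ 1 / lmax)
    (prox : EuclideanSpace ℝ (Fin M) → EuclideanSpace ℝ (Fin M))
    (hprox : ∀ w p, prox w = p ↔
      ∀ z : EuclideanSpace ℝ (Fin M),
        (1 / lam) * f₁ p + (1 / 2) * ‖p - w‖ ^ 2 ≤ (1 / lam) * f₁ z + (1 / 2) * ‖z - w‖ ^ 2)
    (T1 : EuclideanSpace ℝ (Fin M) → EuclideanSpace ℝ (Fin N) → EuclideanSpace ℝ (Fin M))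
    (hT1 : ∀ v u, T1 v u =
      (B (u - Qinv (gradf₂ u)) + (v - lam • B (Qinv (Badj v))))
        - prox (B (u - Qinv (gradf₂ u)) + (v - lam • B (Qinv (Badj v)))))
    (T2 : EuclideanSpace ℝ (Fin M) → EuclideanSpace ℝ (Fin N) → EuclideanSpace ℝ (Fin N))
    (hT2 : ∀ v u, T2 v u = u - Qinv (gradf₂ u) - lam • Qinv (Badj (T1 v u)))
    (hQnorm : ‖Qinv‖ ≤ 2 * β)
    (v₁ v₂ : EuclideanSpace ℝ (Fin M)) (u₁ u₂ : EuclideanSpace ℝ (Fin N)) :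
    Real.sqrt (⟪T2 v₁ u₁ - T2 v₂ u₂, Q (T2 v₁ u₁ - T2 v₂ u₂)⟫
        + lam * ‖T1 v₁ u₁ - T1 v₂ u₂‖ ^ 2)
      ≤ Real.sqrt (⟪u₁ - u₂, Q (u₁ - u₂)⟫ + lam * ‖v₁ - v₂‖ ^ 2) := by
  -- basic adjoint / symmetry facts
  have adj : ∀ (a : EuclideanSpace ℝ (Fin M)) (b : EuclideanSpace ℝ (Fin N)),
      ⟪a, B b⟫ = ⟪Badj a, b⟫ := by
    intro a b
    rw [real_inner_comm, hadj, real_inner_comm]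
  have qsymm' : ∀ a b : EuclideanSpace ℝ (Fin N), ⟪Qinv a, b⟫ = ⟪a, Qinv b⟫ := by
    intro a b
    calc ⟪Qinv a, b⟫ = ⟪Qinv a, Q (Qinv b)⟫ := by rw [hQinv₂]
      _ = ⟪Q (Qinv a), Qinv b⟫ := (hQsymm _ _).symm
      _ = ⟪a, Qinv b⟫ := by rw [hQinv₂]
  set K := B.comp (Qinv.comp Badj) with hKdef
  have hKapp : ∀ y, K y = B (Qinv (Badj y)) := fun _ => rfl
  have Ksym : ∀ a b, ⟪K a, b⟫ = ⟪a, K b⟫ := by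
    intro a b
    rw [hKapp, hKapp, hadj, qsymm', ← adj]
  have Kpsd : ∀ y, 0 ≤ ⟪y, K y⟫ := by
    intro y
    rw [hKapp, adj]
    by_cases hq : Qinv (Badj y) = 0
    · rw [hq, inner_zero_right]
    · have h1 : Badj y = Q (Qinv (Badj y)) := (hQinv₂ _).symm
      calc (0:ℝ) ≤ ⟪Qinv (Badj y), Q (Qinv (Badj y))⟫ := (hQpos _ hq).le
        _ = ⟪Q (Qinv (Badj y)), Qinv (Badj y)⟫ := real_inner_comm _ _
        _ = ⟪Badj y, Qinv (Badj y)⟫ := by rw [← h1]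
  -- eigenvalue bound
  have hl1 : 0 < lmax := by
    by_contra h
    push_neg at h
    have : 1 / lmax ≤ 0 := one_div_nonpos.mpr h
    linarith
  have hll : lam * lmax ≤ 1 := (le_div_iff₀ hl1).mp hlam2
  have hKbound : ∀ y, lam * ⟪y, K y⟫ ≤ ‖y‖ ^ 2 := by
    intro y
    have h1 := quadform_le_lmax K Ksym lmax (fun μ hμ => hlmax.2 hμ) y
    have h2 : lam * ⟪y, K y⟫ ≤ lam * (lmax * ‖y‖ ^ 2) :=
      mul_le_mul_of_nonneg_left h1 hlam.le
    nlinarith [sq_nonneg ‖y‖]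
  -- abbreviations
  set u := u₁ - u₂ with hu
  set v := v₁ - v₂ with hv
  set d := gradf₂ u₁ - gradf₂ u₂ with hd
  set g := u - Qinv d with hg
  set x₁ := B (u₁ - Qinv (gradf₂ u₁)) + (v₁ - lam • B (Qinv (Badj v₁))) with hx₁
  set x₂ := B (u₂ - Qinv (gradf₂ u₂)) + (v₂ - lam • B (Qinv (Badj v₂))) with hx₂
  set p₁ := prox x₁ with hp₁
  set p₂ := prox x₂ with hp₂
  set t := T1 v₁ u₁ - T1 v₂ u₂ with htdef
  set s2 := T2 v₁ u₁ - T2 v₂ u₂ with hs2def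
  have hT1₁ : T1 v₁ u₁ = x₁ - p₁ := by rw [hT1, hp₁, hx₁]
  have hT1₂ : T1 v₂ u₂ = x₂ - p₂ := by rw [hT1, hp₂, hx₂]
  have ht : t = (x₁ - x₂) - (p₁ - p₂) := by
    rw [htdef, hT1₁, hT1₂]; abel
  have hx : x₁ - x₂ = B g + (v - lam • K v) := by
    rw [hx₁, hx₂, hg, hu, hd, hv, hKapp]
    simp only [map_sub, smul_sub]
    abel
  have hs2 : s2 = g - lam • Qinv (Badj t) := by
    rw [hs2def, hT2 v₁ u₁, hT2 v₂ u₂, hg, hu, hd, htdef]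
    simp only [map_sub, smul_sub]
    abel
  -- firm nonexpansiveness of I - prox
  have hmin₁ := (hprox x₁ p₁).mp hp₁.symm
  have hmin₂ := (hprox x₂ p₂).mp hp₂.symm
  have hfirm : ‖p₁ - p₂‖ ^ 2 ≤ ⟪x₁ - x₂, p₁ - p₂⟫ :=
    prox_firm f₁ hf₁ (1 / lam) (by positivity) x₁ x₂ p₁ p₂ hmin₁ hmin₂
  have ht2x : ‖t‖ ^ 2 ≤ ⟪t, x₁ - x₂⟫ := by
    have key : ∀ X P : EuclideanSpace ℝ (Fin M),
        ⟪X - P, X⟫ - ‖X - P‖ ^ 2 = ⟪X, P⟫ - ‖P‖ ^ 2 := by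
      intro X P
      rw [← real_inner_self_eq_norm_sq, ← real_inner_self_eq_norm_sq]
      simp only [inner_sub_left, inner_sub_right]
      rw [real_inner_comm P X]
      ring
    have e := key (x₁ - x₂) (p₁ - p₂)
    rw [← ht] at e
    linarith [hfirm, e]
  have F1 : ‖t‖ ^ 2 ≤ ⟪t, B g⟫ + ⟪t, v⟫ - lam * ⟪t, K v⟫ := by
    have e : ⟪t, x₁ - x₂⟫ = ⟪t, B g⟫ + ⟪t, v⟫ - lam * ⟪t, K v⟫ := by
      rw [hx]
      simp only [inner_add_right, inner_sub_right, real_inner_smul_right]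
      ring
    linarith [ht2x, e]
  -- expansion of ⟪s2, Q s2⟫
  have keyE1 : ∀ (gg : EuclideanSpace ℝ (Fin N)) (tt : EuclideanSpace ℝ (Fin M)),
      ⟪gg - lam • Qinv (Badj tt), Q (gg - lam • Qinv (Badj tt))⟫
        = ⟪gg, Q gg⟫ - 2 * lam * ⟪tt, B gg⟫ + lam ^ 2 * ⟪tt, K tt⟫ := by
    intro gg tt
    have hb1 : ⟪gg, Badj tt⟫ = ⟪tt, B gg⟫ := by rw [← hadj, real_inner_comm]
    have hb2 : ⟪Qinv (Badj tt), Q gg⟫ = ⟪tt, B gg⟫ := by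
      rw [qsymm', hQinv₁, real_inner_comm, ← hadj, real_inner_comm]
    have hb3 : ⟪Qinv (Badj tt), Badj tt⟫ = ⟪tt, K tt⟫ := by
      rw [← hadj, real_inner_comm, hKapp]
    rw [map_sub, map_smul, hQinv₂]
    simp only [inner_sub_left, inner_sub_right, real_inner_smul_left, real_inner_smul_right]
    rw [hb1, hb2, hb3]
    ring
  have E1 : ⟪s2, Q s2⟫ = ⟪g, Q g⟫ - 2 * lam * ⟪t, B g⟫ + lam ^ 2 * ⟪t, K t⟫ := by
    rw [hs2]; exact keyE1 g t
  -- ⟪g, Q g⟫ ≤ ⟪u, Q u⟫ via cocoercivity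
  have E2 : ⟪g, Q g⟫ ≤ ⟪u, Q u⟫ := by
    have keyE2 : ∀ uu dd : EuclideanSpace ℝ (Fin N),
        ⟪uu - Qinv dd, Q (uu - Qinv dd)⟫
          = ⟪uu, Q uu⟫ - 2 * ⟪dd, uu⟫ + ⟪Qinv dd, dd⟫ := by
      intro uu dd
      rw [map_sub, hQinv₂]
      simp only [inner_sub_left, inner_sub_right]
      rw [qsymm', hQinv₁, real_inner_comm uu dd]
      ring
    have e : ⟪g, Q g⟫ = ⟪u, Q u⟫ - 2 * ⟪d, u⟫ + ⟪Qinv d, d⟫ := by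
      rw [hg]; exact keyE2 u d
    have cauchy : ⟪Qinv d, d⟫ ≤ 2 * β * ‖d‖ ^ 2 := by
      calc ⟪Qinv d, d⟫ ≤ ‖Qinv d‖ * ‖d‖ := real_inner_le_norm _ _
        _ ≤ (‖Qinv‖ * ‖d‖) * ‖d‖ :=
          mul_le_mul_of_nonneg_right (Qinv.le_opNorm d) (norm_nonneg d)
        _ ≤ (2 * β * ‖d‖) * ‖d‖ :=
          mul_le_mul_of_nonneg_right
            (mul_le_mul_of_nonneg_right hQnorm (norm_nonneg d)) (norm_nonneg d)
        _ = 2 * β * ‖d‖ ^ 2 := by ring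
    have hco := hcoco u₁ u₂
    rw [← hd, ← hu] at hco
    linarith [e, cauchy, hco]
  -- spectral inequality at t - v
  have E3 : lam * (⟪t, K t⟫ - 2 * ⟪t, K v⟫ + ⟪v, K v⟫) ≤ ‖t‖ ^ 2 - 2 * ⟪t, v⟫ + ‖v‖ ^ 2 := by
    have hb := hKbound (t - v)
    have keyE3 : ∀ tt vv : EuclideanSpace ℝ (Fin M),
        ⟪tt - vv, K (tt - vv)⟫ = ⟪tt, K tt⟫ - 2 * ⟪tt, K vv⟫ + ⟪vv, K vv⟫ := by
      intro tt vv
      rw [map_sub]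
      simp only [inner_sub_left, inner_sub_right]
      rw [show ⟪vv, K tt⟫ = ⟪tt, K vv⟫ by rw [← Ksym, real_inner_comm]]
      ring
    rw [keyE3 t v, norm_sub_sq_real] at hb
    linarith [hb]
  -- assemble
  apply Real.sqrt_le_sqrt
  have h2F1 : 2 * lam * ‖t‖ ^ 2 ≤ 2 * lam * (⟪t, B g⟫ + ⟪t, v⟫ - lam * ⟪t, K v⟫) :=
    mul_le_mul_of_nonneg_left F1 (by positivity)
  have hE3 : lam * (lam * (⟪t, K t⟫ - 2 * ⟪t, K v⟫ + ⟪v, K v⟫))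
      ≤ lam * (‖t‖ ^ 2 - 2 * ⟪t, v⟫ + ‖v‖ ^ 2) :=
    mul_le_mul_of_nonneg_left E3 hlam.le
  have hKV : 0 ≤ lam ^ 2 * ⟪v, K v⟫ := mul_nonneg (sq_nonneg lam) (Kpsd v)
  nlinarith [E1, E2, h2F1, hE3, hKV]
end

section
/- Assume ‖Q⁻¹‖₂ ≤ 2β and 0 < λ ≤ 1/λ_max(BQ⁻¹Bᵀ). Let w* be a fixed point of T and let w^k be generated by w^{k+1} = T(w^k) from an arbitrary initial point w⁰ ∈ ℝ^M × ℝ^N. Then the sequence ‖w^k − w*‖_{λ,Q} is non-increasing in k; in particular the sequence {w^k} is bounded. -/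
open scoped RealInnerProductSpace

private lemma le_of_forall_small_aux (a b c : ℝ) (hc : 0 ≤ c)
    (h : ∀ t : ℝ, 0 < t → t ≤ 1 → a ≤ b + t * c) : a ≤ b := by
  by_contra hab
  push_neg at hab
  have h1 : (0:ℝ) < (a - b) / (2 * (c + 1)) := div_pos (by linarith) (by linarith)
  have ht : 0 < min 1 ((a - b) / (2 * (c + 1))) := lt_min one_pos h1
  have h2 := h _ ht (min_le_left _ _)
  have ht2 : min 1 ((a - b) / (2 * (c + 1))) ≤ (a - b) / (2 * (c + 1)) := min_le_right _ _
  have h3 : (a - b) / (2 * (c + 1)) * c < a - b := by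
    rw [div_mul_eq_mul_div, div_lt_iff₀ (by positivity)]
    nlinarith
  nlinarith [mul_le_mul_of_nonneg_right ht2 hc]


private lemma core_step {E F : Type*} [NormedAddCommGroup E] [InnerProductSpace ℝ E]
    [NormedAddCommGroup F] [InnerProductSpace ℝ F]
    (Q Qinv : E →L[ℝ] E) (B : E →L[ℝ] F) (Badj : F →L[ℝ] E)
    (hadj : ∀ (x : E) (y : F), ⟪B x, y⟫ = ⟪x, Badj y⟫)
    (hQsymm : ∀ x y : E, ⟪Q x, y⟫ = ⟪x, Q y⟫)
    (hQinv₂ : ∀ x, Q (Qinv x) = x)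
    (lam : ℝ) (hlam : 0 < lam)
    (hSpos : ∀ x : F, 0 ≤ ⟪x, B (Qinv (Badj x))⟫)
    (hIS : ∀ x : F, lam * ⟪x, B (Qinv (Badj x))⟫ ≤ ‖x‖ ^ 2)
    (hAsymm : ∀ x y : F, ⟪x, B (Qinv (Badj y))⟫ = ⟪y, B (Qinv (Badj x))⟫)
    (Dg Du : E) (d Dv : F)
    (hg : ⟪Dg, Q Dg⟫ ≤ ⟪Du, Q Du⟫)
    (hfirmd : ‖d‖ ^ 2 ≤ ⟪d, B Dg + Dv - lam • B (Qinv (Badj Dv))⟫)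
    (Du' : E) (hDu' : Du' = Dg - lam • Qinv (Badj d)) :
    ⟪Du', Q Du'⟫ + lam * ‖d‖ ^ 2 ≤ ⟪Du, Q Du⟫ + lam * ‖Dv‖ ^ 2 := by
  subst hDu'
  have hQd : Q (Dg - lam • Qinv (Badj d)) = Q Dg - lam • Badj d := by
    rw [map_sub, map_smul, hQinv₂]
  have e1 : ⟪Dg, Badj d⟫ = ⟪d, B Dg⟫ := by
    rw [← hadj]; exact real_inner_comm _ _
  have e2 : ⟪Qinv (Badj d), Q Dg⟫ = ⟪d, B Dg⟫ := by
    calc ⟪Qinv (Badj d), Q Dg⟫ = ⟪Q (Qinv (Badj d)), Dg⟫ := (hQsymm _ _).symm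
    _ = ⟪Badj d, Dg⟫ := by rw [hQinv₂]
    _ = ⟪Dg, Badj d⟫ := real_inner_comm _ _
    _ = ⟪d, B Dg⟫ := e1
  have e3 : ⟪Qinv (Badj d), Badj d⟫ = ⟪d, B (Qinv (Badj d))⟫ := by
    rw [← hadj]; exact real_inner_comm _ _
  have S1 : ⟪Dg - lam • Qinv (Badj d), Q (Dg - lam • Qinv (Badj d))⟫
      = ⟪Dg, Q Dg⟫ - 2 * lam * ⟪d, B Dg⟫ + lam ^ 2 * ⟪d, B (Qinv (Badj d))⟫ := by
    rw [hQd, inner_sub_left, inner_sub_right, inner_sub_right, real_inner_smul_left,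
      real_inner_smul_left, real_inner_smul_right, real_inner_smul_right, e1, e2, e3]
    ring
  have S2 : lam * ‖d‖ ^ 2
      ≤ lam * (⟪d, B Dg⟫ + ⟪d, Dv⟫ - lam * ⟪d, B (Qinv (Badj Dv))⟫) := by
    refine mul_le_mul_of_nonneg_left ?_ hlam.le
    rw [inner_sub_right, inner_add_right, real_inner_smul_right] at hfirmd
    linarith
  have S7 : lam * (⟪d, B (Qinv (Badj d))⟫ - 2 * ⟪d, B (Qinv (Badj Dv))⟫
        + ⟪Dv, B (Qinv (Badj Dv))⟫)
      ≤ ‖d‖ ^ 2 - 2 * ⟪d, Dv⟫ + ‖Dv‖ ^ 2 := by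
    have h := hIS (d - Dv)
    have hnorm : ‖d - Dv‖ ^ 2 = ‖d‖ ^ 2 - 2 * ⟪d, Dv⟫ + ‖Dv‖ ^ 2 := norm_sub_sq_real d Dv
    have hexp : ⟪d - Dv, B (Qinv (Badj (d - Dv)))⟫
        = ⟪d, B (Qinv (Badj d))⟫ - 2 * ⟪d, B (Qinv (Badj Dv))⟫ + ⟪Dv, B (Qinv (Badj Dv))⟫ := by
      rw [map_sub, map_sub, map_sub, inner_sub_left, inner_sub_right, inner_sub_right,
        hAsymm Dv d]
      ring
    rw [hexp, hnorm] at h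
    exact h
  have S7' := mul_le_mul_of_nonneg_left S7 hlam.le
  have S6' : 0 ≤ lam * (lam * ⟪Dv, B (Qinv (Badj Dv))⟫) :=
    mul_nonneg hlam.le (mul_nonneg hlam.le (hSpos Dv))
  rw [S1]
  nlinarith [S2, S7', S6', hg]

set_option maxHeartbeats 1000000 in
/-- Under `‖Q⁻¹‖₂ ≤ 2β` and `0 < λ ≤ 1/λ_max(BQ⁻¹Bᵀ)`, if `w* = (v*,u*)` is a fixed
point of `T` and `w^{k+1} = T(w^k)`, then `‖w^k − w*‖_{λ,Q}` is non-increasing in `k`;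
in particular the sequence `{w^k}` is bounded. -/
theorem fp2o_qn_fejer_monotone (N M : ℕ)
    (f₁ : EuclideanSpace ℝ (Fin M) → ℝ) (hf₁ : ConvexOn ℝ Set.univ f₁)
    (f₂ : EuclideanSpace ℝ (Fin N) → ℝ) (hf₂ : ConvexOn ℝ Set.univ f₂)
    (gradf₂ : EuclideanSpace ℝ (Fin N) → EuclideanSpace ℝ (Fin N))
    (hgrad : ∀ u, HasGradientAt f₂ (gradf₂ u) u)
    (B : EuclideanSpace ℝ (Fin N) →L[ℝ] EuclideanSpace ℝ (Fin M))
    (Badj : EuclideanSpace ℝ (Fin M) →L[ℝ] EuclideanSpace ℝ (Fin N))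
    (hadj : ∀ (x : EuclideanSpace ℝ (Fin N)) (y : EuclideanSpace ℝ (Fin M)),
      ⟪B x, y⟫ = ⟪x, Badj y⟫)
    (Q Qinv : EuclideanSpace ℝ (Fin N) →L[ℝ] EuclideanSpace ℝ (Fin N))
    (hQsymm : ∀ x y : EuclideanSpace ℝ (Fin N), ⟪Q x, y⟫ = ⟪x, Q y⟫)
    (hQpos : ∀ x : EuclideanSpace ℝ (Fin N), x ≠ 0 → 0 < ⟪x, Q x⟫)
    (hQinv₁ : ∀ x, Qinv (Q x) = x) (hQinv₂ : ∀ x, Q (Qinv x) = x)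
    (lam : ℝ) (hlam : 0 < lam)
    (β : ℝ) (hβ : 0 < β)
    (hcoco : ∀ v w : EuclideanSpace ℝ (Fin N),
      β * ‖gradf₂ v - gradf₂ w‖ ^ 2 ≤ ⟪gradf₂ v - gradf₂ w, v - w⟫)
    (lmax : ℝ)
    (hlmax : IsGreatest
      {μ : ℝ | Module.End.HasEigenvalue ((B.comp (Qinv.comp Badj)).toLinearMap) μ} lmax)
    (hlam2 : lam ≤ 1 / lmax)
    (prox : EuclideanSpace ℝ (Fin M) → EuclideanSpace ℝ (Fin M))
    (hprox : ∀ w p, prox w = p ↔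
      ∀ z : EuclideanSpace ℝ (Fin M),
        (1 / lam) * f₁ p + (1 / 2) * ‖p - w‖ ^ 2 ≤ (1 / lam) * f₁ z + (1 / 2) * ‖z - w‖ ^ 2)
    (T1 : EuclideanSpace ℝ (Fin M) → EuclideanSpace ℝ (Fin N) → EuclideanSpace ℝ (Fin M))
    (hT1 : ∀ v u, T1 v u =
      (B (u - Qinv (gradf₂ u)) + (v - lam • B (Qinv (Badj v))))
        - prox (B (u - Qinv (gradf₂ u)) + (v - lam • B (Qinv (Badj v)))))
    (T2 : EuclideanSpace ℝ (Fin M) → EuclideanSpace ℝ (Fin N) → EuclideanSpace ℝ (Fin N))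
    (hT2 : ∀ v u, T2 v u = u - Qinv (gradf₂ u) - lam • Qinv (Badj (T1 v u)))
    (hQnorm : ‖Qinv‖ ≤ 2 * β)
    (vs : EuclideanSpace ℝ (Fin M)) (us : EuclideanSpace ℝ (Fin N))
    (hfix1 : T1 vs us = vs) (hfix2 : T2 vs us = us)
    (v : ℕ → EuclideanSpace ℝ (Fin M)) (u : ℕ → EuclideanSpace ℝ (Fin N))
    (hrecv : ∀ k, v (k + 1) = T1 (v k) (u k))
    (hrecu : ∀ k, u (k + 1) = T2 (v k) (u k)) :
    (∀ k, Real.sqrt (⟪u (k + 1) - us, Q (u (k + 1) - us)⟫ + lam * ‖v (k + 1) - vs‖ ^ 2)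
        ≤ Real.sqrt (⟪u k - us, Q (u k - us)⟫ + lam * ‖v k - vs‖ ^ 2)) ∧
    (∃ R : ℝ, ∀ k, ‖v k‖ ≤ R ∧ ‖u k‖ ≤ R) := by
  -- Qinv is symmetric
  have hQisymm : ∀ x y : EuclideanSpace ℝ (Fin N), ⟪Qinv x, y⟫ = ⟪x, Qinv y⟫ := by
    intro x y
    calc ⟪Qinv x, y⟫ = ⟪Qinv x, Q (Qinv y)⟫ := by rw [hQinv₂]
    _ = ⟪Q (Qinv x), Qinv y⟫ := (hQsymm _ _).symm
    _ = ⟪x, Qinv y⟫ := by rw [hQinv₂]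
  -- Q is positive semidefinite
  have hQnn : ∀ x : EuclideanSpace ℝ (Fin N), 0 ≤ ⟪x, Q x⟫ := by
    intro x
    by_cases hx : x = 0
    · simp [hx]
    · exact (hQpos x hx).le
  -- Qinv is positive semidefinite
  have hQinn : ∀ x : EuclideanSpace ℝ (Fin N), 0 ≤ ⟪x, Qinv x⟫ := by
    intro x
    have : ⟪x, Qinv x⟫ = ⟪Qinv x, Q (Qinv x)⟫ := by
      rw [← hQsymm, hQinv₂, real_inner_comm]
    rw [this]; exact hQnn _
  -- lower bound for Q norm : ‖x‖^2 ≤ 2β ⟪x, Qx⟫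
  have hQlow : ∀ x : EuclideanSpace ℝ (Fin N), ‖x‖ ^ 2 ≤ 2 * β * ⟪x, Q x⟫ := by
    intro x
    by_cases hx : x = 0
    · simp [hx]
    · have hs : 0 < ⟪x, Q x⟫ := hQpos x hx
      have key : ∀ τ : ℝ, 0 ≤ ⟪x, Qinv x⟫ + 2 * τ * ‖x‖ ^ 2 + τ ^ 2 * ⟪x, Q x⟫ := by
        intro τ
        have h0 : 0 ≤ ⟪x + τ • Q x, Qinv (x + τ • Q x)⟫ := hQinn _
        have hexp : ⟪x + τ • Q x, Qinv (x + τ • Q x)⟫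
            = ⟪x, Qinv x⟫ + 2 * τ * ‖x‖ ^ 2 + τ ^ 2 * ⟪x, Q x⟫ := by
          rw [map_add, map_smul, hQinv₁, inner_add_left, inner_add_right, inner_add_right,
            real_inner_smul_left, real_inner_smul_left, real_inner_smul_right,
            real_inner_smul_right]
          have e1 : ⟪Q x, Qinv x⟫ = ‖x‖ ^ 2 := by
            rw [hQsymm, hQinv₂, real_inner_self_eq_norm_sq]
          have e2 : ⟪x, x⟫ = ‖x‖ ^ 2 := real_inner_self_eq_norm_sq x
          have e3 : ⟪Q x, x⟫ = ⟪x, Q x⟫ := real_inner_comm _ _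
          rw [e1, e2, e3]; ring
        rw [hexp] at h0; exact h0
      have hQix : ⟪x, Qinv x⟫ ≤ 2 * β * ‖x‖ ^ 2 := by
        have h1 : ⟪x, Qinv x⟫ ≤ ‖x‖ * ‖Qinv x‖ := real_inner_le_norm _ _
        have h2 : ‖Qinv x‖ ≤ ‖Qinv‖ * ‖x‖ := Qinv.le_opNorm x
        nlinarith [norm_nonneg x, norm_nonneg (Qinv x)]
      nlinarith [key (-(2*β)), hQix, hβ, mul_pos hβ hβ]
  -- variational inequality for prox
  have hVI : ∀ w z : EuclideanSpace ℝ (Fin M),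
      ⟪w - prox w, z - prox w⟫ ≤ (1 / lam) * f₁ z - (1 / lam) * f₁ (prox w) := by
    intro w z
    have hmin := (hprox w (prox w)).mp rfl
    apply le_of_forall_small_aux _ _ ((1/2) * ‖z - prox w‖ ^ 2) (by positivity)
    intro t ht ht1
    have hzt := hmin (prox w + t • (z - prox w))
    have hconv : f₁ (prox w + t • (z - prox w)) ≤ (1 - t) * f₁ (prox w) + t * f₁ z := by
      have h := hf₁.2 (Set.mem_univ (prox w)) (Set.mem_univ z)
        (by linarith : (0:ℝ) ≤ 1 - t) ht.le (by ring)
      have heq : (1 - t) • prox w + t • z = prox w + t • (z - prox w) := by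
        module
      rw [heq] at h
      simpa using h
    have hnorm : ‖prox w + t • (z - prox w) - w‖ ^ 2
        = ‖prox w - w‖ ^ 2 + 2 * t * ⟪prox w - w, z - prox w⟫ + t ^ 2 * ‖z - prox w‖ ^ 2 := by
      have heq : prox w + t • (z - prox w) - w = (prox w - w) + t • (z - prox w) := by
        module
      rw [heq, norm_add_sq_real, real_inner_smul_right, norm_smul]
      rw [mul_pow, Real.norm_eq_abs, sq_abs]
      ring
    rw [hnorm] at hzt
    have hil : (0:ℝ) < 1 / lam := by positivity
    have hconv' : (1/lam) * f₁ (prox w + t • (z - prox w))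
        ≤ (1/lam) * ((1 - t) * f₁ (prox w) + t * f₁ z) :=
      mul_le_mul_of_nonneg_left hconv hil.le
    have hinner : ⟪w - prox w, z - prox w⟫ = - ⟪prox w - w, z - prox w⟫ := by
      rw [← inner_neg_left]; congr 1; module
    rw [hinner]
    have ht' : 0 < t := ht
    nlinarith [hzt, hconv', mul_pos hil ht']
  -- firm nonexpansiveness of I - prox
  have hfirm : ∀ w w' : EuclideanSpace ℝ (Fin M),
      ‖(w - prox w) - (w' - prox w')‖ ^ 2 ≤ ⟪(w - prox w) - (w' - prox w'), w - w'⟫ := by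
    intro w w'
    have h1 := hVI w (prox w')
    have h2 := hVI w' (prox w)
    have hsum : ⟪w - prox w, prox w' - prox w⟫ + ⟪w' - prox w', prox w - prox w'⟫ ≤ 0 := by
      linarith
    have hexp : ⟪(w - prox w) - (w' - prox w'), w - w'⟫
        = ‖(w - prox w) - (w' - prox w')‖ ^ 2
          + ⟪(w - prox w) - (w' - prox w'), prox w - prox w'⟫ := by
      have heq : w - w' = ((w - prox w) - (w' - prox w')) + (prox w - prox w') := by module
      rw [heq, inner_add_right, real_inner_self_eq_norm_sq]
    have hcross : 0 ≤ ⟪(w - prox w) - (w' - prox w'), prox w - prox w'⟫ := by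
      have e1 : ⟪w - prox w, prox w' - prox w⟫ = - ⟪w - prox w, prox w - prox w'⟫ := by
        rw [← inner_neg_right]; congr 1; module
      have e2 : ⟪w' - prox w', prox w - prox w'⟫ = ⟪w' - prox w', prox w - prox w'⟫ := rfl
      rw [inner_sub_left]
      linarith [hsum, e1.symm.le]
    linarith [hexp, hcross]
  -- A = B Qinv Badj : positive semidefinite and symmetric
  -- A = B Qinv Badj : positive semidefinite and symmetric
  have hSexp : ∀ x : EuclideanSpace ℝ (Fin M), ⟪x, B (Qinv (Badj x))⟫ = ⟪Badj x, Qinv (Badj x)⟫ := by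
    intro x
    rw [real_inner_comm, hadj]
    exact real_inner_comm _ _
  have hSpos : ∀ x : EuclideanSpace ℝ (Fin M), 0 ≤ ⟪x, B (Qinv (Badj x))⟫ := by
    intro x
    rw [hSexp]
    exact hQinn _
  have hAsymm : ∀ x y : EuclideanSpace ℝ (Fin M),
      ⟪x, B (Qinv (Badj y))⟫ = ⟪y, B (Qinv (Badj x))⟫ := by
    intro x y
    calc ⟪x, B (Qinv (Badj y))⟫ = ⟪B (Qinv (Badj y)), x⟫ := real_inner_comm _ _
    _ = ⟪Qinv (Badj y), Badj x⟫ := hadj _ _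
    _ = ⟪Badj y, Qinv (Badj x)⟫ := hQisymm _ _
    _ = ⟪Qinv (Badj x), Badj y⟫ := real_inner_comm _ _
    _ = ⟪B (Qinv (Badj x)), y⟫ := (hadj _ _).symm
    _ = ⟪y, B (Qinv (Badj x))⟫ := real_inner_comm _ _
  -- spectral bound : lam * ⟪x, A x⟫ ≤ ‖x‖^2
  have hIS : ∀ x : EuclideanSpace ℝ (Fin M), lam * ⟪x, B (Qinv (Badj x))⟫ ≤ ‖x‖ ^ 2 := by
    have hlmaxpos : 0 < lmax := by
      by_contra hneg
      push_neg at hneg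
      have : 1 / lmax ≤ 0 := one_div_nonpos.mpr hneg
      linarith
    have hlamlmax : lam * lmax ≤ 1 := by
      rw [le_div_iff₀ hlmaxpos] at hlam2
      exact hlam2
    have hAsa : ((B.comp (Qinv.comp Badj)).toLinearMap).IsSymmetric := by
      intro x y
      have hx : (B.comp (Qinv.comp Badj)).toLinearMap x = B (Qinv (Badj x)) := rfl
      have hy : (B.comp (Qinv.comp Badj)).toLinearMap y = B (Qinv (Badj y)) := rfl
      rw [hx, hy, real_inner_comm]
      exact hAsymm y x
    obtain ⟨x₀, hx₀⟩ := Module.End.HasEigenvalue.exists_hasEigenvector hlmax.1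
    haveI : Nontrivial (EuclideanSpace ℝ (Fin M)) := ⟨x₀, 0, hx₀.2⟩
    have hμ := hAsa.hasEigenvalue_iSup_of_finiteDimensional
    have hμle : (⨆ x : { x : EuclideanSpace ℝ (Fin M) // x ≠ 0 },
        RCLike.re ⟪(B.comp (Qinv.comp Badj)).toLinearMap x, (x : EuclideanSpace ℝ (Fin M))⟫
          / ‖(x : EuclideanSpace ℝ (Fin M))‖ ^ 2) ≤ lmax := hlmax.2 hμ
    have hbdd : BddAbove (Set.range fun x : { x : EuclideanSpace ℝ (Fin M) // x ≠ 0 } =>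
        RCLike.re ⟪(B.comp (Qinv.comp Badj)).toLinearMap x, (x : EuclideanSpace ℝ (Fin M))⟫
          / ‖(x : EuclideanSpace ℝ (Fin M))‖ ^ 2) := by
      refine ⟨‖B.comp (Qinv.comp Badj)‖, ?_⟩
      rintro r ⟨x, rfl⟩
      have hx : (0:ℝ) < ‖(x : EuclideanSpace ℝ (Fin M))‖ := norm_pos_iff.mpr x.2
      have h1 : ⟪(B.comp (Qinv.comp Badj)).toLinearMap x, (x : EuclideanSpace ℝ (Fin M))⟫
          ≤ ‖(B.comp (Qinv.comp Badj)) (x : EuclideanSpace ℝ (Fin M))‖ * ‖(x : EuclideanSpace ℝ (Fin M))‖ :=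
        real_inner_le_norm _ _
      have h2 : ‖(B.comp (Qinv.comp Badj)) (x : EuclideanSpace ℝ (Fin M))‖
          ≤ ‖B.comp (Qinv.comp Badj)‖ * ‖(x : EuclideanSpace ℝ (Fin M))‖ :=
        (B.comp (Qinv.comp Badj)).le_opNorm _
      simp only [RCLike.re_to_real]
      rw [div_le_iff₀ (by positivity)]
      nlinarith
    intro x
    by_cases hx : x = 0
    · rw [hx, inner_zero_left, norm_zero]
      norm_num
    · have hray : RCLike.re ⟪(B.comp (Qinv.comp Badj)).toLinearMap x, x⟫ / ‖x‖ ^ 2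
          ≤ lmax :=
        le_trans (le_ciSup hbdd (⟨x, hx⟩ : { x : EuclideanSpace ℝ (Fin M) // x ≠ 0 })) hμle
      have hx2 : (0:ℝ) < ‖x‖ ^ 2 := pow_pos (norm_pos_iff.mpr hx) 2
      have happ : (B.comp (Qinv.comp Badj)).toLinearMap x = B (Qinv (Badj x)) := rfl
      rw [happ] at hray
      simp only [RCLike.re_to_real] at hray
      rw [div_le_iff₀ hx2] at hray
      have h3 : ⟪x, B (Qinv (Badj x))⟫ ≤ lmax * ‖x‖ ^ 2 := by
        rw [real_inner_comm]; exact hray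
      nlinarith [mul_le_mul_of_nonneg_left h3 hlam.le, hx2]
  -- one-step Fejér inequality
  have hstep : ∀ (v0 : EuclideanSpace ℝ (Fin M)) (u0 : EuclideanSpace ℝ (Fin N)),
      ⟪T2 v0 u0 - us, Q (T2 v0 u0 - us)⟫ + lam * ‖T1 v0 u0 - vs‖ ^ 2
        ≤ ⟪u0 - us, Q (u0 - us)⟫ + lam * ‖v0 - vs‖ ^ 2 := by
    intro v0 u0
    -- the cocoercivity estimate
    have hg : ⟪(u0 - us) - Qinv (gradf₂ u0 - gradf₂ us),
          Q ((u0 - us) - Qinv (gradf₂ u0 - gradf₂ us))⟫ ≤ ⟪u0 - us, Q (u0 - us)⟫ := by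
      have hcocoD := hcoco u0 us
      have hDle : ⟪Qinv (gradf₂ u0 - gradf₂ us), gradf₂ u0 - gradf₂ us⟫
          ≤ 2 * β * ‖gradf₂ u0 - gradf₂ us‖ ^ 2 := by
        have h1 : ⟪Qinv (gradf₂ u0 - gradf₂ us), gradf₂ u0 - gradf₂ us⟫
            ≤ ‖Qinv (gradf₂ u0 - gradf₂ us)‖ * ‖gradf₂ u0 - gradf₂ us‖ :=
          real_inner_le_norm _ _
        have h2 : ‖Qinv (gradf₂ u0 - gradf₂ us)‖ ≤ ‖Qinv‖ * ‖gradf₂ u0 - gradf₂ us‖ :=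
          Qinv.le_opNorm _
        nlinarith [norm_nonneg (gradf₂ u0 - gradf₂ us), norm_nonneg (Qinv (gradf₂ u0 - gradf₂ us))]
      have hexp : ⟪(u0 - us) - Qinv (gradf₂ u0 - gradf₂ us),
            Q ((u0 - us) - Qinv (gradf₂ u0 - gradf₂ us))⟫
          = ⟪u0 - us, Q (u0 - us)⟫ - 2 * ⟪gradf₂ u0 - gradf₂ us, u0 - us⟫
            + ⟪Qinv (gradf₂ u0 - gradf₂ us), gradf₂ u0 - gradf₂ us⟫ := by
        have hQapp : Q ((u0 - us) - Qinv (gradf₂ u0 - gradf₂ us))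
            = Q (u0 - us) - (gradf₂ u0 - gradf₂ us) := by
          rw [map_sub Q, hQinv₂]
        have e2 : ⟪Qinv (gradf₂ u0 - gradf₂ us), Q (u0 - us)⟫
            = ⟪gradf₂ u0 - gradf₂ us, u0 - us⟫ := by
          calc ⟪Qinv (gradf₂ u0 - gradf₂ us), Q (u0 - us)⟫
              = ⟪Q (Qinv (gradf₂ u0 - gradf₂ us)), u0 - us⟫ := (hQsymm _ _).symm
          _ = ⟪gradf₂ u0 - gradf₂ us, u0 - us⟫ := by rw [hQinv₂]
        have ea : ⟪u0 - us, Q (u0 - us) - (gradf₂ u0 - gradf₂ us)⟫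
            = ⟪u0 - us, Q (u0 - us)⟫ - ⟪gradf₂ u0 - gradf₂ us, u0 - us⟫ := by
          rw [inner_sub_right, real_inner_comm (u0 - us) (gradf₂ u0 - gradf₂ us)]
        have eb : ⟪Qinv (gradf₂ u0 - gradf₂ us), Q (u0 - us) - (gradf₂ u0 - gradf₂ us)⟫
            = ⟪gradf₂ u0 - gradf₂ us, u0 - us⟫
              - ⟪Qinv (gradf₂ u0 - gradf₂ us), gradf₂ u0 - gradf₂ us⟫ := by
          rw [inner_sub_right, e2]
        rw [hQapp, inner_sub_left, ea, eb]
        ring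
      rw [hexp]
      nlinarith [hβ, hcocoD, hDle]
    -- firm nonexpansiveness applied to the two inputs
    have hvs : vs = (B (us - Qinv (gradf₂ us)) + (vs - lam • B (Qinv (Badj vs))))
        - prox (B (us - Qinv (gradf₂ us)) + (vs - lam • B (Qinv (Badj vs)))) := by
      conv_lhs => rw [← hfix1]
      rw [hT1]
    have hd : T1 v0 u0 - vs
        = ((B (u0 - Qinv (gradf₂ u0)) + (v0 - lam • B (Qinv (Badj v0))))
            - prox (B (u0 - Qinv (gradf₂ u0)) + (v0 - lam • B (Qinv (Badj v0)))))
          - ((B (us - Qinv (gradf₂ us)) + (vs - lam • B (Qinv (Badj vs))))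
            - prox (B (us - Qinv (gradf₂ us)) + (vs - lam • B (Qinv (Badj vs))))) := by
      rw [hT1 v0 u0]
      nth_rewrite 1 [hvs]
      rfl
    have hww' : (B (u0 - Qinv (gradf₂ u0)) + (v0 - lam • B (Qinv (Badj v0))))
          - (B (us - Qinv (gradf₂ us)) + (vs - lam • B (Qinv (Badj vs))))
        = B ((u0 - us) - Qinv (gradf₂ u0 - gradf₂ us)) + (v0 - vs)
          - lam • B (Qinv (Badj (v0 - vs))) := by
      simp only [map_sub, smul_sub]
      abel
    have hfirmd : ‖T1 v0 u0 - vs‖ ^ 2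
        ≤ ⟪T1 v0 u0 - vs, B ((u0 - us) - Qinv (gradf₂ u0 - gradf₂ us)) + (v0 - vs)
            - lam • B (Qinv (Badj (v0 - vs)))⟫ := by
      have h := hfirm (B (u0 - Qinv (gradf₂ u0)) + (v0 - lam • B (Qinv (Badj v0))))
        (B (us - Qinv (gradf₂ us)) + (vs - lam • B (Qinv (Badj vs))))
      rw [← hd, hww'] at h
      exact h
    -- identity for the u-update
    have h2 : us - Qinv (gradf₂ us) - lam • Qinv (Badj vs) = us := by
      conv_rhs => rw [← hfix2, hT2 vs us, hfix1]
    have hDu' : T2 v0 u0 - us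
        = ((u0 - us) - Qinv (gradf₂ u0 - gradf₂ us)) - lam • Qinv (Badj (T1 v0 u0 - vs)) := by
      calc T2 v0 u0 - us
          = (u0 - Qinv (gradf₂ u0) - lam • Qinv (Badj (T1 v0 u0)))
            - (us - Qinv (gradf₂ us) - lam • Qinv (Badj vs)) := by rw [hT2 v0 u0, h2]
      _ = ((u0 - us) - Qinv (gradf₂ u0 - gradf₂ us)) - lam • Qinv (Badj (T1 v0 u0 - vs)) := by
          simp only [map_sub, smul_sub]
          abel
    exact core_step Q Qinv B Badj hadj hQsymm hQinv₂ lam hlam hSpos hIS hAsymm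
      ((u0 - us) - Qinv (gradf₂ u0 - gradf₂ us)) (u0 - us) (T1 v0 u0 - vs) (v0 - vs)
      hg hfirmd (T2 v0 u0 - us) hDu'
  -- conclusion
  have hstepk : ∀ k, ⟪u (k + 1) - us, Q (u (k + 1) - us)⟫ + lam * ‖v (k + 1) - vs‖ ^ 2
      ≤ ⟪u k - us, Q (u k - us)⟫ + lam * ‖v k - vs‖ ^ 2 := by
    intro k
    rw [hrecu k, hrecv k]
    exact hstep (v k) (u k)
  constructor
  · intro k
    exact Real.sqrt_le_sqrt (hstepk k)
  · have hmono : ∀ k, ⟪u k - us, Q (u k - us)⟫ + lam * ‖v k - vs‖ ^ 2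
        ≤ ⟪u 0 - us, Q (u 0 - us)⟫ + lam * ‖v 0 - vs‖ ^ 2 := by
      intro k
      induction k with
      | zero => exact le_refl _
      | succ n ih => exact le_trans (hstepk n) ih
    refine ⟨‖vs‖ + ‖us‖
        + Real.sqrt (2 * β * (⟪u 0 - us, Q (u 0 - us)⟫ + lam * ‖v 0 - vs‖ ^ 2))
        + Real.sqrt ((⟪u 0 - us, Q (u 0 - us)⟫ + lam * ‖v 0 - vs‖ ^ 2) / lam),
      fun k => ⟨?_, ?_⟩⟩
    · -- bound on ‖v k‖
      have h1 : lam * ‖v k - vs‖ ^ 2 ≤ ⟪u 0 - us, Q (u 0 - us)⟫ + lam * ‖v 0 - vs‖ ^ 2 :=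
        le_trans (by linarith [hQnn (u k - us), hmono k]) (le_refl _)
      have h2 : ‖v k - vs‖ ^ 2
          ≤ (⟪u 0 - us, Q (u 0 - us)⟫ + lam * ‖v 0 - vs‖ ^ 2) / lam := by
        rw [le_div_iff₀ hlam]
        linarith
      have h3 : ‖v k - vs‖
          ≤ Real.sqrt ((⟪u 0 - us, Q (u 0 - us)⟫ + lam * ‖v 0 - vs‖ ^ 2) / lam) :=
        Real.le_sqrt_of_sq_le h2
      have h4 : ‖v k‖ ≤ ‖v k - vs‖ + ‖vs‖ := by
        calc ‖v k‖ = ‖(v k - vs) + vs‖ := by rw [sub_add_cancel]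
        _ ≤ ‖v k - vs‖ + ‖vs‖ := norm_add_le _ _
      have h5 : 0 ≤ Real.sqrt (2 * β * (⟪u 0 - us, Q (u 0 - us)⟫ + lam * ‖v 0 - vs‖ ^ 2)) :=
        Real.sqrt_nonneg _
      linarith [norm_nonneg us]
    · -- bound on ‖u k‖
      have h1 : ⟪u k - us, Q (u k - us)⟫ ≤ ⟪u 0 - us, Q (u 0 - us)⟫ + lam * ‖v 0 - vs‖ ^ 2 := by
        nlinarith [hmono k, mul_nonneg hlam.le (sq_nonneg ‖v k - vs‖)]
      have h2 : ‖u k - us‖ ^ 2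
          ≤ 2 * β * (⟪u 0 - us, Q (u 0 - us)⟫ + lam * ‖v 0 - vs‖ ^ 2) := by
        have := hQlow (u k - us)
        nlinarith [hβ]
      have h3 : ‖u k - us‖
          ≤ Real.sqrt (2 * β * (⟪u 0 - us, Q (u 0 - us)⟫ + lam * ‖v 0 - vs‖ ^ 2)) :=
        Real.le_sqrt_of_sq_le h2
      have h4 : ‖u k‖ ≤ ‖u k - us‖ + ‖us‖ := by
        calc ‖u k‖ = ‖(u k - us) + us‖ := by rw [sub_add_cancel]
        _ ≤ ‖u k - us‖ + ‖us‖ := norm_add_le _ _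
      have h5 : 0 ≤ Real.sqrt ((⟪u 0 - us, Q (u 0 - us)⟫ + lam * ‖v 0 - vs‖ ^ 2) / lam) :=
        Real.sqrt_nonneg _
      linarith [norm_nonneg vs]
end

section
/- Assume ‖Q⁻¹‖₂ < 2β and 0 < λ ≤ 1/λ_max(BQ⁻¹Bᵀ), and assume T has at least one fixed point. Let w^k = (v^k, u^k) be generated by w^{k+1} = T(w^k) from an arbitrary initial point. Then the FP²O_QN iteration is asymptotically regular: ‖w^{k+1} − w^k‖_{λ,Q} → 0 as k → ∞; in particular ‖v^{k+1} − v^k‖ → 0 and ‖u^{k+1} − u^k‖_Q → 0. -/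
open scoped RealInnerProductSpace
open Filter Topology

lemma cs_psd {E : Type*} [NormedAddCommGroup E] [InnerProductSpace ℝ E]
    (S : E →L[ℝ] E) (hsymm : ∀ x y : E, ⟪S x, y⟫ = ⟪x, S y⟫)
    (hpos : ∀ x : E, 0 ≤ ⟪x, S x⟫) (a b : E) :
    ⟪a, S b⟫ ^ 2 ≤ ⟪a, S a⟫ * ⟪b, S b⟫ := by
  have key : ∀ τ : ℝ, 0 ≤ ⟪a, S a⟫ + 2 * τ * ⟪a, S b⟫ + τ ^ 2 * ⟪b, S b⟫ := by
    intro τ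
    have h0 := hpos (a + τ • b)
    have hba : ⟪b, S a⟫ = ⟪a, S b⟫ := by
      rw [← hsymm a b]; exact real_inner_comm (S a) b
    have hexp : ⟪a + τ • b, S (a + τ • b)⟫
        = ⟪a, S a⟫ + 2 * τ * ⟪a, S b⟫ + τ ^ 2 * ⟪b, S b⟫ := by
      rw [map_add, map_smul, inner_add_left, inner_add_right, inner_add_right,
        real_inner_smul_left, real_inner_smul_right, real_inner_smul_right,
        real_inner_smul_left, hba]
      ring
    rw [hexp] at h0
    exact h0
  rcases (hpos b).lt_or_eq with hb | hb
  · have hbne : ⟪b, S b⟫ ≠ 0 := ne_of_gt hb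
    have h2 := key (-(⟪a, S b⟫) / ⟪b, S b⟫)
    have e1 : 2 * (-(⟪a, S b⟫) / ⟪b, S b⟫) * ⟪a, S b⟫
        = -2 * (⟪a, S b⟫ ^ 2 / ⟪b, S b⟫) := by ring
    have e2 : (-(⟪a, S b⟫) / ⟪b, S b⟫) ^ 2 * ⟪b, S b⟫ = ⟪a, S b⟫ ^ 2 / ⟪b, S b⟫ := by
      field_simp
    rw [e1, e2] at h2
    have h3 : ⟪a, S b⟫ ^ 2 / ⟪b, S b⟫ ≤ ⟪a, S a⟫ := by linarith
    calc ⟪a, S b⟫ ^ 2 = ⟪a, S b⟫ ^ 2 / ⟪b, S b⟫ * ⟪b, S b⟫ := by field_simp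
      _ ≤ ⟪a, S a⟫ * ⟪b, S b⟫ := mul_le_mul_of_nonneg_right h3 hb.le
  · have hX : ⟪a, S b⟫ = 0 := by
      by_contra hX
      have h3 := key ((-(⟪a, S a⟫) - 1) / (2 * ⟪a, S b⟫))
      rw [← hb] at h3
      have e3 : 2 * ((-(⟪a, S a⟫) - 1) / (2 * ⟪a, S b⟫)) * ⟪a, S b⟫
          = -(⟪a, S a⟫) - 1 := by field_simp
      rw [e3] at h3
      nlinarith [h3]
    rw [hX, ← hb]
    norm_num

lemma ray_bound (M : ℕ) (Cop : EuclideanSpace ℝ (Fin M) →L[ℝ] EuclideanSpace ℝ (Fin M))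
    (hCsymm : ∀ x y : EuclideanSpace ℝ (Fin M), ⟪Cop x, y⟫ = ⟪x, Cop y⟫)
    (lmax : ℝ)
    (hlmax : IsGreatest {μ : ℝ | Module.End.HasEigenvalue (Cop.toLinearMap) μ} lmax) :
    ∀ x : EuclideanSpace ℝ (Fin M), ⟪x, Cop x⟫ ≤ lmax * ‖x‖ ^ 2 := by
  have hnt : Nontrivial (EuclideanSpace ℝ (Fin M)) := by
    obtain ⟨w, hw⟩ := hlmax.1.exists_hasEigenvector
    exact nontrivial_of_ne w 0 hw.2
  have hsym : (Cop.toLinearMap).IsSymmetric := fun x y => hCsymm x y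
  have hev := hsym.hasEigenvalue_iSup_of_finiteDimensional
  have hrle : (⨆ x : { x : EuclideanSpace ℝ (Fin M) // x ≠ 0 },
      RCLike.re (⟪Cop.toLinearMap x, (x : EuclideanSpace ℝ (Fin M))⟫ : ℝ)
        / ‖(x : EuclideanSpace ℝ (Fin M))‖ ^ 2) ≤ lmax := hlmax.2 hev
  intro x
  rcases eq_or_ne x 0 with h0 | h0
  · simp [h0]
  · have hb : BddAbove (Set.range fun z : { x : EuclideanSpace ℝ (Fin M) // x ≠ 0 } =>
        RCLike.re (⟪Cop.toLinearMap z, (z : EuclideanSpace ℝ (Fin M))⟫ : ℝ)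
          / ‖(z : EuclideanSpace ℝ (Fin M))‖ ^ 2) := by
      refine ⟨‖Cop‖, ?_⟩
      rintro y ⟨z, rfl⟩
      have hz : (0:ℝ) < ‖(z : EuclideanSpace ℝ (Fin M))‖ ^ 2 :=
        pow_pos (norm_pos_iff.mpr z.2) 2
      rw [div_le_iff₀ hz]
      have h1 : RCLike.re (⟪Cop.toLinearMap z, (z : EuclideanSpace ℝ (Fin M))⟫ : ℝ)
          = ⟪Cop (z : EuclideanSpace ℝ (Fin M)), (z : EuclideanSpace ℝ (Fin M))⟫ := rfl
      rw [h1]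
      calc ⟪Cop (z : EuclideanSpace ℝ (Fin M)), (z : EuclideanSpace ℝ (Fin M))⟫
          ≤ ‖Cop (z : EuclideanSpace ℝ (Fin M))‖ * ‖(z : EuclideanSpace ℝ (Fin M))‖ :=
            real_inner_le_norm _ _
        _ ≤ ‖Cop‖ * ‖(z : EuclideanSpace ℝ (Fin M))‖ * ‖(z : EuclideanSpace ℝ (Fin M))‖ :=
            mul_le_mul_of_nonneg_right (Cop.le_opNorm _) (norm_nonneg _)
        _ = ‖Cop‖ * ‖(z : EuclideanSpace ℝ (Fin M))‖ ^ 2 := by ring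
    have hle := le_ciSup hb (⟨x, h0⟩ : { x : EuclideanSpace ℝ (Fin M) // x ≠ 0 })
    have hx2 : (0:ℝ) < ‖x‖ ^ 2 := pow_pos (norm_pos_iff.mpr h0) 2
    have h1 : RCLike.re (⟪Cop.toLinearMap (⟨x, h0⟩ : { x : EuclideanSpace ℝ (Fin M) // x ≠ 0 }).1,
        ((⟨x, h0⟩ : { x : EuclideanSpace ℝ (Fin M) // x ≠ 0 }) : EuclideanSpace ℝ (Fin M))⟫ : ℝ)
        = ⟪Cop x, x⟫ := rfl
    rw [h1] at hle
    rw [div_le_iff₀ hx2] at hle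
    calc ⟪x, Cop x⟫ = ⟪Cop x, x⟫ := real_inner_comm _ _
      _ ≤ (⨆ z : { x : EuclideanSpace ℝ (Fin M) // x ≠ 0 },
            RCLike.re (⟪Cop.toLinearMap z, (z : EuclideanSpace ℝ (Fin M))⟫ : ℝ)
              / ‖(z : EuclideanSpace ℝ (Fin M))‖ ^ 2) * ‖x‖ ^ 2 := hle
      _ ≤ lmax * ‖x‖ ^ 2 := mul_le_mul_of_nonneg_right hrle (sq_nonneg _)

lemma firm_resid (M : ℕ) (f₁ : EuclideanSpace ℝ (Fin M) → ℝ) (hf₁ : ConvexOn ℝ Set.univ f₁)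
    (lam : ℝ) (hlam : 0 < lam)
    (prox : EuclideanSpace ℝ (Fin M) → EuclideanSpace ℝ (Fin M))
    (hprox : ∀ w p, prox w = p ↔
      ∀ z : EuclideanSpace ℝ (Fin M),
        (1 / lam) * f₁ p + (1 / 2) * ‖p - w‖ ^ 2 ≤ (1 / lam) * f₁ z + (1 / 2) * ‖z - w‖ ^ 2) :
    ∀ a b : EuclideanSpace ℝ (Fin M),
      ‖(a - prox a) - (b - prox b)‖ ^ 2 ≤ ⟪(a - prox a) - (b - prox b), a - b⟫ := by
  have hproxmin : ∀ w z, (1 / lam) * f₁ (prox w) + (1 / 2) * ‖prox w - w‖ ^ 2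
      ≤ (1 / lam) * f₁ z + (1 / 2) * ‖z - w‖ ^ 2 := fun w => (hprox w (prox w)).mp rfl
  have hsubgrad : ∀ w z, ⟪w - prox w, z - prox w⟫ ≤ (1 / lam) * (f₁ z - f₁ (prox w)) := by
    intro w z
    set p := prox w with hp
    have hstep : ∀ t : ℝ, 0 < t → t ≤ 1 →
        0 ≤ (1 / lam) * (f₁ z - f₁ p) + ⟪p - w, z - p⟫ + (t / 2) * ‖z - p‖ ^ 2 := by
      intro t ht ht1
      have hmin := hproxmin w ((1 - t) • p + t • z)
      have hconv : f₁ ((1 - t) • p + t • z) ≤ (1 - t) * f₁ p + t * f₁ z :=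
        hf₁.2 (Set.mem_univ p) (Set.mem_univ z) (by linarith) ht.le (by ring)
      have hl : (0:ℝ) < 1 / lam := by positivity
      have hconv' : (1 / lam) * f₁ ((1 - t) • p + t • z)
          ≤ (1 / lam) * ((1 - t) * f₁ p + t * f₁ z) :=
        mul_le_mul_of_nonneg_left hconv hl.le
      have hexp : ‖(1 - t) • p + t • z - w‖ ^ 2
          = ‖p - w‖ ^ 2 + 2 * t * ⟪p - w, z - p⟫ + t ^ 2 * ‖z - p‖ ^ 2 := by
        have h1 : (1 - t) • p + t • z - w = (p - w) + t • (z - p) := by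
          rw [sub_smul, one_smul, smul_sub]; abel
        rw [h1, norm_add_sq_real, real_inner_smul_right, norm_smul, Real.norm_eq_abs,
          mul_pow, sq_abs]
        ring
      rw [hexp] at hmin
      have hcomb : 0 ≤ t * ((1 / lam) * (f₁ z - f₁ p) + ⟪p - w, z - p⟫
          + (t / 2) * ‖z - p‖ ^ 2) := by nlinarith [hmin, hconv']
      have h' : t * (0:ℝ) ≤ t * ((1 / lam) * (f₁ z - f₁ p) + ⟪p - w, z - p⟫
          + (t / 2) * ‖z - p‖ ^ 2) := by rw [mul_zero]; exact hcomb
      exact le_of_mul_le_mul_left h' ht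
    have hK : 0 ≤ (1 / lam) * (f₁ z - f₁ p) + ⟪p - w, z - p⟫ := by
      by_contra hneg
      push_neg at hneg
      have hN0 : (0:ℝ) ≤ ‖z - p‖ ^ 2 := sq_nonneg _
      rcases hN0.lt_or_eq with hNpos | hN0'
      · set K := (1 / lam) * (f₁ z - f₁ p) + ⟪p - w, z - p⟫ with hKdef
        have ht0 : 0 < min 1 (-K / ‖z - p‖ ^ 2) :=
          lt_min one_pos (div_pos (by linarith) hNpos)
        have hs := hstep (min 1 (-K / ‖z - p‖ ^ 2)) ht0 (min_le_left _ _)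
        have h6 : min 1 (-K / ‖z - p‖ ^ 2) * ‖z - p‖ ^ 2 ≤ -K :=
          (le_div_iff₀ hNpos).mp (min_le_right _ _)
        nlinarith [hs, h6]
      · have hs := hstep 1 one_pos le_rfl
        rw [← hN0'] at hs
        linarith
    have hflip : ⟪p - w, z - p⟫ = -⟪w - p, z - p⟫ := by
      rw [show p - w = -(w - p) by abel, inner_neg_left]
    linarith [hK, hflip]
  intro a b
  have h1 := hsubgrad a (prox b)
  have h2 := hsubgrad b (prox a)
  have hsum : ⟪a - prox a, prox b - prox a⟫ + ⟪b - prox b, prox a - prox b⟫ ≤ 0 := by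
    linarith
  have hid : ⟪(a - prox a) - (b - prox b), a - b⟫
      = ‖(a - prox a) - (b - prox b)‖ ^ 2
        + ⟪(a - prox a) - (b - prox b), prox a - prox b⟫ := by
    rw [← real_inner_self_eq_norm_sq, ← inner_add_right]
    congr 1
    abel
  have hposin : 0 ≤ ⟪(a - prox a) - (b - prox b), prox a - prox b⟫ := by
    have e : ⟪(a - prox a) - (b - prox b), prox a - prox b⟫
        = -(⟪a - prox a, prox b - prox a⟫ + ⟪b - prox b, prox a - prox b⟫) := by
      rw [inner_sub_left]
      have e1 : ⟪a - prox a, prox a - prox b⟫ = -⟪a - prox a, prox b - prox a⟫ := by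
        rw [show prox a - prox b = -(prox b - prox a) by abel, inner_neg_right]
      rw [e1]; ring
    rw [e]; linarith
  linarith [hid, hposin]

lemma key_arith (lam cb A1 A2 S1 NT X P TT TV VV NQ U1 F4v F5v : ℝ)
    (hlam : 0 < lam)
    (hF1 : U1 = S1 - 2 * lam * X + lam ^ 2 * TT)
    (hF3 : S1 ≤ A1 - cb * NQ)
    (hF2 : NT ≤ X + P - lam * TV)
    (hF4 : F4v = NT - 2 * P + A2)
    (hF5 : F5v = TT - 2 * TV + VV) :
    (U1 + lam * NT) + (cb * NQ + lam ^ 2 * VV + (lam * F4v - lam ^ 2 * F5v))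
      ≤ A1 + lam * A2 := by
  subst hF1 hF4 hF5
  have h := mul_le_mul_of_nonneg_left hF2 (by positivity : (0:ℝ) ≤ 2 * lam)
  nlinarith [h, hF3]

set_option maxHeartbeats 1000000 in
/-- Under `‖Q⁻¹‖₂ < 2β` and `0 < λ ≤ 1/λ_max(BQ⁻¹Bᵀ)`, if `T` has a fixed point, the
FP²O_QN iteration `w^{k+1} = T(w^k)` is asymptotically regular:
`‖w^{k+1} − w^k‖_{λ,Q} → 0`; in particular `‖v^{k+1} − v^k‖ → 0` and
`‖u^{k+1} − u^k‖_Q → 0`. -/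
theorem fp2o_qn_asymptotic_regularity (N M : ℕ)
    (f₁ : EuclideanSpace ℝ (Fin M) → ℝ) (hf₁ : ConvexOn ℝ Set.univ f₁)
    (f₂ : EuclideanSpace ℝ (Fin N) → ℝ) (hf₂ : ConvexOn ℝ Set.univ f₂)
    (gradf₂ : EuclideanSpace ℝ (Fin N) → EuclideanSpace ℝ (Fin N))
    (hgrad : ∀ u, HasGradientAt f₂ (gradf₂ u) u)
    (B : EuclideanSpace ℝ (Fin N) →L[ℝ] EuclideanSpace ℝ (Fin M))
    (Badj : EuclideanSpace ℝ (Fin M) →L[ℝ] EuclideanSpace ℝ (Fin N))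
    (hadj : ∀ (x : EuclideanSpace ℝ (Fin N)) (y : EuclideanSpace ℝ (Fin M)),
      ⟪B x, y⟫ = ⟪x, Badj y⟫)
    (Q Qinv : EuclideanSpace ℝ (Fin N) →L[ℝ] EuclideanSpace ℝ (Fin N))
    (hQsymm : ∀ x y : EuclideanSpace ℝ (Fin N), ⟪Q x, y⟫ = ⟪x, Q y⟫)
    (hQpos : ∀ x : EuclideanSpace ℝ (Fin N), x ≠ 0 → 0 < ⟪x, Q x⟫)
    (hQinv₁ : ∀ x, Qinv (Q x) = x) (hQinv₂ : ∀ x, Q (Qinv x) = x)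
    (lam : ℝ) (hlam : 0 < lam)
    (β : ℝ) (hβ : 0 < β)
    (hcoco : ∀ v w : EuclideanSpace ℝ (Fin N),
      β * ‖gradf₂ v - gradf₂ w‖ ^ 2 ≤ ⟪gradf₂ v - gradf₂ w, v - w⟫)
    (lmax : ℝ)
    (hlmax : IsGreatest
      {μ : ℝ | Module.End.HasEigenvalue ((B.comp (Qinv.comp Badj)).toLinearMap) μ} lmax)
    (hlam2 : lam ≤ 1 / lmax)
    (prox : EuclideanSpace ℝ (Fin M) → EuclideanSpace ℝ (Fin M))
    (hprox : ∀ w p, prox w = p ↔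
      ∀ z : EuclideanSpace ℝ (Fin M),
        (1 / lam) * f₁ p + (1 / 2) * ‖p - w‖ ^ 2 ≤ (1 / lam) * f₁ z + (1 / 2) * ‖z - w‖ ^ 2)
    (T1 : EuclideanSpace ℝ (Fin M) → EuclideanSpace ℝ (Fin N) → EuclideanSpace ℝ (Fin M))
    (hT1 : ∀ v u, T1 v u =
      (B (u - Qinv (gradf₂ u)) + (v - lam • B (Qinv (Badj v))))
        - prox (B (u - Qinv (gradf₂ u)) + (v - lam • B (Qinv (Badj v)))))
    (T2 : EuclideanSpace ℝ (Fin M) → EuclideanSpace ℝ (Fin N) → EuclideanSpace ℝ (Fin N))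
    (hT2 : ∀ v u, T2 v u = u - Qinv (gradf₂ u) - lam • Qinv (Badj (T1 v u)))
    (hQnorm : ‖Qinv‖ < 2 * β)
    (hfix : ∃ (vs : EuclideanSpace ℝ (Fin M)) (us : EuclideanSpace ℝ (Fin N)),
      T1 vs us = vs ∧ T2 vs us = us)
    (v : ℕ → EuclideanSpace ℝ (Fin M)) (u : ℕ → EuclideanSpace ℝ (Fin N))
    (hrecv : ∀ k, v (k + 1) = T1 (v k) (u k))
    (hrecu : ∀ k, u (k + 1) = T2 (v k) (u k)) :
    Tendsto (fun k => Real.sqrt (⟪u (k + 1) - u k, Q (u (k + 1) - u k)⟫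
        + lam * ‖v (k + 1) - v k‖ ^ 2)) atTop (𝓝 0) ∧
    Tendsto (fun k => ‖v (k + 1) - v k‖) atTop (𝓝 0) ∧
    Tendsto (fun k => Real.sqrt ⟪u (k + 1) - u k, Q (u (k + 1) - u k)⟫) atTop (𝓝 0) := by
  obtain ⟨vs, us, hfixv, hfixu⟩ := hfix
  set Cop := B.comp (Qinv.comp Badj) with hCop
  have hCapp : ∀ x, Cop x = B (Qinv (Badj x)) := fun x => rfl
  clear_value Cop
  have hQinvsymm : ∀ x y : EuclideanSpace ℝ (Fin N), ⟪Qinv x, y⟫ = ⟪x, Qinv y⟫ := by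
    intro x y
    calc ⟪Qinv x, y⟫ = ⟪Qinv x, Q (Qinv y)⟫ := by rw [hQinv₂]
      _ = ⟪Q (Qinv x), Qinv y⟫ := (hQsymm _ _).symm
      _ = ⟪x, Qinv y⟫ := by rw [hQinv₂]
  have hCsymm : ∀ x y : EuclideanSpace ℝ (Fin M), ⟪Cop x, y⟫ = ⟪x, Cop y⟫ := by
    intro x y
    calc ⟪Cop x, y⟫ = ⟪Qinv (Badj x), Badj y⟫ := by rw [hCapp]; exact hadj _ y
      _ = ⟪Badj x, Qinv (Badj y)⟫ := hQinvsymm _ _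
      _ = ⟪Qinv (Badj y), Badj x⟫ := real_inner_comm _ _
      _ = ⟪B (Qinv (Badj y)), x⟫ := (hadj _ x).symm
      _ = ⟪x, B (Qinv (Badj y))⟫ := real_inner_comm _ _
      _ = ⟪x, Cop y⟫ := by rw [hCapp]
  have hQpsd : ∀ x : EuclideanSpace ℝ (Fin N), 0 ≤ ⟪x, Q x⟫ := by
    intro x
    rcases eq_or_ne x 0 with h0 | h0
    · simp [h0]
    · exact (hQpos x h0).le
  have hCz : ∀ x : EuclideanSpace ℝ (Fin M),
      ⟪x, Cop x⟫ = ⟪Qinv (Badj x), Q (Qinv (Badj x))⟫ := by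
    intro x
    calc ⟪x, Cop x⟫ = ⟪Cop x, x⟫ := real_inner_comm _ _
      _ = ⟪Qinv (Badj x), Badj x⟫ := by rw [hCapp]; exact hadj _ x
      _ = ⟪Qinv (Badj x), Q (Qinv (Badj x))⟫ := by rw [hQinv₂]
  have hCpsd : ∀ x : EuclideanSpace ℝ (Fin M), 0 ≤ ⟪x, Cop x⟫ := by
    intro x; rw [hCz x]; exact hQpsd _
  have hlmaxpos : 0 < lmax := by
    by_contra h
    push_neg at h
    have h1 : 1 / lmax ≤ 0 := one_div_nonpos.mpr h
    linarith
  have hray := ray_bound M Cop hCsymm lmax hlmax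
  have hray2 : ∀ x : EuclideanSpace ℝ (Fin M), lam * ⟪x, Cop x⟫ ≤ ‖x‖ ^ 2 := by
    intro x
    have h1 := hray x
    have h2 : lam * ⟪x, Cop x⟫ ≤ lam * (lmax * ‖x‖ ^ 2) :=
      mul_le_mul_of_nonneg_left h1 hlam.le
    have h3 : lam * lmax ≤ 1 := (le_div_iff₀ hlmaxpos).mp hlam2
    nlinarith [sq_nonneg ‖x‖]
  have hznorm : ∀ z : EuclideanSpace ℝ (Fin N), ‖z‖ ^ 2 ≤ ‖Qinv‖ * ⟪z, Q z⟫ := by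
    intro z
    rcases eq_or_ne z 0 with h0 | h0
    · simp only [h0, norm_zero, map_zero, inner_zero_left, mul_zero]
      norm_num
    · have hcs := cs_psd Q hQsymm hQpsd z (Qinv z)
      rw [hQinv₂] at hcs
      rw [real_inner_self_eq_norm_sq] at hcs
      have h2 : ⟪Qinv z, z⟫ ≤ ‖Qinv‖ * ‖z‖ ^ 2 := by
        calc ⟪Qinv z, z⟫ ≤ ‖Qinv z‖ * ‖z‖ := real_inner_le_norm _ _
          _ ≤ ‖Qinv‖ * ‖z‖ * ‖z‖ :=
              mul_le_mul_of_nonneg_right (Qinv.le_opNorm z) (norm_nonneg _)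
          _ = ‖Qinv‖ * ‖z‖ ^ 2 := by ring
      have h3 : (0:ℝ) < ‖z‖ ^ 2 := pow_pos (norm_pos_iff.mpr h0) 2
      have h4 : 0 ≤ ⟪z, Q z⟫ := hQpsd z
      nlinarith [hcs, h2, h3, h4]
  have hzb : ∀ x : EuclideanSpace ℝ (Fin M),
      ‖Qinv (Badj x)‖ ^ 2 ≤ ‖Qinv‖ * ⟪x, Cop x⟫ := by
    intro x; rw [hCz x]; exact hznorm _
  have hfirm := firm_resid M f₁ hf₁ lam hlam prox hprox
  have hc0 : (0:ℝ) < 2 * β - ‖Qinv‖ := by linarith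
  -- basic recurrences
  set sE : ℕ → EuclideanSpace ℝ (Fin N) :=
    fun k => (u k - us) - Qinv (gradf₂ (u k) - gradf₂ us) with hsE
  clear_value sE
  have hus2 : us = us - Qinv (gradf₂ us) - lam • Qinv (Badj vs) := by
    conv_lhs => rw [← hfixu]
    rw [hT2, hfixv]
  have hudiff : ∀ k, u (k + 1) - us = sE k - lam • Qinv (Badj (v (k + 1) - vs)) := by
    intro k
    have h1 : u (k + 1) = u k - Qinv (gradf₂ (u k)) - lam • Qinv (Badj (v (k + 1))) := by
      rw [hrecu k, hT2, ← hrecv k]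
    calc u (k + 1) - us
        = (u k - Qinv (gradf₂ (u k)) - lam • Qinv (Badj (v (k + 1))))
          - (us - Qinv (gradf₂ us) - lam • Qinv (Badj vs)) := by rw [← h1, ← hus2]
      _ = sE k - lam • Qinv (Badj (v (k + 1) - vs)) := by
          simp only [hsE, map_sub, smul_sub]; abel
  -- E1
  have hE1 : ∀ k, ⟪u (k + 1) - us, Q (u (k + 1) - us)⟫
      = ⟪sE k, Q (sE k)⟫ - 2 * lam * ⟪B (sE k), v (k + 1) - vs⟫
        + lam ^ 2 * ⟪v (k + 1) - vs, Cop (v (k + 1) - vs)⟫ := by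
    intro k
    rw [hudiff k]
    set t := v (k + 1) - vs with htdef
    have hA : ⟪sE k, Badj t⟫ = ⟪B (sE k), t⟫ := (hadj _ _).symm
    have hB2 : ⟪Qinv (Badj t), Q (sE k)⟫ = ⟪B (sE k), t⟫ := by
      rw [← hQsymm, hQinv₂, hadj (sE k) t]
      exact real_inner_comm _ _
    have hC2 : ⟪Qinv (Badj t), Badj t⟫ = ⟪t, Cop t⟫ := by
      rw [hCapp, ← hadj]
      exact real_inner_comm _ _
    rw [map_sub Q (sE k) (lam • Qinv (Badj t)), map_smul, hQinv₂]
    simp only [inner_sub_left, inner_sub_right, real_inner_smul_left, real_inner_smul_right]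
    rw [hA, hB2, hC2]
    ring
  -- E3
  have hE3 : ∀ k, ⟪sE k, Q (sE k)⟫
      ≤ ⟪u k - us, Q (u k - us)⟫
        - (2 * β - ‖Qinv‖) * ‖gradf₂ (u k) - gradf₂ us‖ ^ 2 := by
    intro k
    have hco : β * ‖gradf₂ (u k) - gradf₂ us‖ ^ 2
        ≤ ⟪gradf₂ (u k) - gradf₂ us, u k - us⟫ := hcoco (u k) us
    simp only [hsE]
    set du := u k - us with hdu
    set q := gradf₂ (u k) - gradf₂ us with hq
    rw [map_sub Q du (Qinv q), inner_sub_left, inner_sub_right, inner_sub_right, hQinv₂ q]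
    have h2 : ⟪Qinv q, Q du⟫ = ⟪q, du⟫ := by rw [← hQsymm, hQinv₂]
    have h3 : ⟪du, q⟫ = ⟪q, du⟫ := real_inner_comm _ _
    have h4 : ⟪Qinv q, q⟫ ≤ ‖Qinv‖ * ‖q‖ ^ 2 := by
      calc ⟪Qinv q, q⟫ ≤ ‖Qinv q‖ * ‖q‖ := real_inner_le_norm _ _
        _ ≤ ‖Qinv‖ * ‖q‖ * ‖q‖ :=
            mul_le_mul_of_nonneg_right (Qinv.le_opNorm q) (norm_nonneg _)
        _ = ‖Qinv‖ * ‖q‖ ^ 2 := by ring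
    linarith [hco, h2, h3, h4]
  -- E2
  have hE2 : ∀ k, ‖v (k + 1) - vs‖ ^ 2
      ≤ ⟪v (k + 1) - vs, B (sE k)⟫ + ⟪v (k + 1) - vs, v k - vs⟫
        - lam * ⟪v (k + 1) - vs, Cop (v k - vs)⟫ := by
    intro k
    have hw := hfirm (B (u k - Qinv (gradf₂ (u k))) + (v k - lam • B (Qinv (Badj (v k)))))
                     (B (us - Qinv (gradf₂ us)) + (vs - lam • B (Qinv (Badj vs))))
    rw [← hT1 (v k) (u k), ← hT1 vs us, ← hrecv k, hfixv] at hw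
    have hwd : (B (u k - Qinv (gradf₂ (u k))) + (v k - lam • B (Qinv (Badj (v k)))))
        - (B (us - Qinv (gradf₂ us)) + (vs - lam • B (Qinv (Badj vs))))
        = B (sE k) + ((v k - vs) - lam • Cop (v k - vs)) := by
      simp only [hsE, hCapp, map_sub, smul_sub]
      abel
    rw [hwd] at hw
    rw [inner_add_right, inner_sub_right, real_inner_smul_right] at hw
    linarith [hw]
  -- master inequality
  have key : ∀ k, (⟪u (k + 1) - us, Q (u (k + 1) - us)⟫ + lam * ‖v (k + 1) - vs‖ ^ 2)
      + ((2 * β - ‖Qinv‖) * ‖gradf₂ (u k) - gradf₂ us‖ ^ 2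
        + lam ^ 2 * ⟪v k - vs, Cop (v k - vs)⟫
        + (lam * ‖v (k + 1) - v k‖ ^ 2
            - lam ^ 2 * ⟪v (k + 1) - v k, Cop (v (k + 1) - v k)⟫))
      ≤ ⟪u k - us, Q (u k - us)⟫ + lam * ‖v k - vs‖ ^ 2 := by
    intro k
    have F3 := hE3 k
    have F2 := hE2 k
    have F1 := hE1 k
    have hXc : ⟪v (k + 1) - vs, B (sE k)⟫ = ⟪B (sE k), v (k + 1) - vs⟫ :=
      real_inner_comm _ _
    rw [← hXc] at F1
    have F4 : ‖v (k + 1) - v k‖ ^ 2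
        = ‖v (k + 1) - vs‖ ^ 2 - 2 * ⟪v (k + 1) - vs, v k - vs⟫ + ‖v k - vs‖ ^ 2 := by
      have h : v (k + 1) - v k = (v (k + 1) - vs) - (v k - vs) := by abel
      rw [h, norm_sub_sq_real]
    have F5 : ⟪v (k + 1) - v k, Cop (v (k + 1) - v k)⟫
        = ⟪v (k + 1) - vs, Cop (v (k + 1) - vs)⟫
          - 2 * ⟪v (k + 1) - vs, Cop (v k - vs)⟫ + ⟪v k - vs, Cop (v k - vs)⟫ := by
      have h : v (k + 1) - v k = (v (k + 1) - vs) - (v k - vs) := by abel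
      rw [h, map_sub, inner_sub_left, inner_sub_right, inner_sub_right]
      have hc : ⟪v k - vs, Cop (v (k + 1) - vs)⟫ = ⟪v (k + 1) - vs, Cop (v k - vs)⟫ := by
        rw [← hCsymm]
        exact real_inner_comm _ _
      rw [hc]; ring
    have F2c : ‖v (k + 1) - vs‖ ^ 2
        ≤ ⟪v (k + 1) - vs, B (sE k)⟫ + ⟪v (k + 1) - vs, v k - vs⟫
          - lam * ⟪v (k + 1) - vs, Cop (v k - vs)⟫ := F2
    exact key_arith lam (2 * β - ‖Qinv‖)
      ⟪u k - us, Q (u k - us)⟫ (‖v k - vs‖ ^ 2)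
      ⟪sE k, Q (sE k)⟫ (‖v (k + 1) - vs‖ ^ 2)
      ⟪v (k + 1) - vs, B (sE k)⟫ ⟪v (k + 1) - vs, v k - vs⟫
      ⟪v (k + 1) - vs, Cop (v (k + 1) - vs)⟫ ⟪v (k + 1) - vs, Cop (v k - vs)⟫
      ⟪v k - vs, Cop (v k - vs)⟫ (‖gradf₂ (u k) - gradf₂ us‖ ^ 2)
      ⟪u (k + 1) - us, Q (u (k + 1) - us)⟫ (‖v (k + 1) - v k‖ ^ 2)
      ⟪v (k + 1) - v k, Cop (v (k + 1) - v k)⟫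
      hlam F1 F3 F2c F4 F5
  -- sequences
  set bseq : ℕ → ℝ :=
    fun k => ⟪u k - us, Q (u k - us)⟫ + lam * ‖v k - vs‖ ^ 2 with hbseq
  set dseq : ℕ → ℝ :=
    fun k => (2 * β - ‖Qinv‖) * ‖gradf₂ (u k) - gradf₂ us‖ ^ 2
      + lam ^ 2 * ⟪v k - vs, Cop (v k - vs)⟫
      + (lam * ‖v (k + 1) - v k‖ ^ 2
          - lam ^ 2 * ⟪v (k + 1) - v k, Cop (v (k + 1) - v k)⟫) with hdseq
  clear_value bseq dseq
  have hkey2 : ∀ k, bseq (k + 1) + dseq k ≤ bseq k := by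
    intro k
    simp only [hbseq, hdseq]
    exact key k
  have hq_nonneg : ∀ k, 0 ≤ (2 * β - ‖Qinv‖) * ‖gradf₂ (u k) - gradf₂ us‖ ^ 2 :=
    fun k => mul_nonneg hc0.le (sq_nonneg _)
  have hvv_nonneg : ∀ k, 0 ≤ lam ^ 2 * ⟪v k - vs, Cop (v k - vs)⟫ :=
    fun k => mul_nonneg (sq_nonneg _) (hCpsd _)
  have hm_nonneg : ∀ k, 0 ≤ lam * ‖v (k + 1) - v k‖ ^ 2
      - lam ^ 2 * ⟪v (k + 1) - v k, Cop (v (k + 1) - v k)⟫ := by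
    intro k
    have h1 := hray2 (v (k + 1) - v k)
    nlinarith [h1, hlam.le]
  have hdpos : ∀ k, 0 ≤ dseq k := by
    intro k
    simp only [hdseq]
    linarith [hq_nonneg k, hvv_nonneg k, hm_nonneg k]
  have hbpos : ∀ k, 0 ≤ bseq k := by
    intro k
    simp only [hbseq]
    exact add_nonneg (hQpsd _) (mul_nonneg hlam.le (sq_nonneg _))
  have hub : ∀ n, ∑ k ∈ Finset.range n, dseq k ≤ bseq 0 := by
    have H : ∀ n, (∑ k ∈ Finset.range n, dseq k) + bseq n ≤ bseq 0 := by
      intro n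
      induction n with
      | zero => simp
      | succ m ih =>
        rw [Finset.sum_range_succ]
        have := hkey2 m
        linarith
    intro n
    linarith [H n, hbpos n]
  have hsummable : Summable dseq := summable_of_sum_range_le hdpos hub
  have hd0 : Tendsto dseq atTop (𝓝 0) := hsummable.tendsto_atTop_zero
  -- component limits
  have htq : Tendsto (fun k => ‖gradf₂ (u k) - gradf₂ us‖ ^ 2) atTop (𝓝 0) := by
    have h1 : Tendsto (fun k => (2 * β - ‖Qinv‖) * ‖gradf₂ (u k) - gradf₂ us‖ ^ 2)
        atTop (𝓝 0) := by
      refine squeeze_zero hq_nonneg (fun k => ?_) hd0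
      simp only [hdseq]
      linarith [hvv_nonneg k, hm_nonneg k]
    have heq : (fun k => ‖gradf₂ (u k) - gradf₂ us‖ ^ 2)
        = fun k => (1 / (2 * β - ‖Qinv‖))
            * ((2 * β - ‖Qinv‖) * ‖gradf₂ (u k) - gradf₂ us‖ ^ 2) := by
      funext k
      rw [← mul_assoc, one_div, inv_mul_cancel₀ (ne_of_gt hc0), one_mul]
    rw [heq]
    simpa only [mul_zero] using h1.const_mul (1 / (2 * β - ‖Qinv‖))
  have htVV : Tendsto (fun k => ⟪v k - vs, Cop (v k - vs)⟫) atTop (𝓝 0) := by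
    have h1 : Tendsto (fun k => lam ^ 2 * ⟪v k - vs, Cop (v k - vs)⟫) atTop (𝓝 0) := by
      refine squeeze_zero hvv_nonneg (fun k => ?_) hd0
      simp only [hdseq]
      linarith [hq_nonneg k, hm_nonneg k]
    have hlamsq : (lam ^ 2 : ℝ) ≠ 0 := by positivity
    have heq : (fun k => ⟪v k - vs, Cop (v k - vs)⟫)
        = fun k => (1 / lam ^ 2) * (lam ^ 2 * ⟪v k - vs, Cop (v k - vs)⟫) := by
      funext k
      rw [← mul_assoc, one_div, inv_mul_cancel₀ hlamsq, one_mul]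
    rw [heq]
    simpa only [mul_zero] using h1.const_mul (1 / lam ^ 2)
  have htm : Tendsto (fun k => lam * ‖v (k + 1) - v k‖ ^ 2
      - lam ^ 2 * ⟪v (k + 1) - v k, Cop (v (k + 1) - v k)⟫) atTop (𝓝 0) := by
    refine squeeze_zero hm_nonneg (fun k => ?_) hd0
    simp only [hdseq]
    linarith [hq_nonneg k, hvv_nonneg k]
  have htVV1 : Tendsto (fun k => ⟪v (k + 1) - vs, Cop (v (k + 1) - vs)⟫) atTop (𝓝 0) := by
    have := htVV.comp (tendsto_add_atTop_nat 1)
    simpa only [Function.comp_def] using this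
  have htDC : Tendsto (fun k => ⟪v (k + 1) - v k, Cop (v (k + 1) - v k)⟫) atTop (𝓝 0) := by
    refine squeeze_zero (fun k => hCpsd _) (fun k => ?_)
      (by simpa only [mul_zero, add_zero] using (htVV1.const_mul 2).add (htVV.const_mul 2))
    have hab : v (k + 1) - v k = (v (k + 1) - vs) - (v k - vs) := by abel
    have hexp : ⟪(v (k + 1) - vs) - (v k - vs), Cop ((v (k + 1) - vs) - (v k - vs))⟫
        + ⟪(v (k + 1) - vs) + (v k - vs), Cop ((v (k + 1) - vs) + (v k - vs))⟫
        = 2 * ⟪v (k + 1) - vs, Cop (v (k + 1) - vs)⟫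
          + 2 * ⟪v k - vs, Cop (v k - vs)⟫ := by
      rw [map_sub, map_add, inner_sub_left, inner_add_left, inner_sub_right, inner_sub_right,
        inner_add_right, inner_add_right]
      have hc : ⟪v k - vs, Cop (v (k + 1) - vs)⟫ = ⟪v (k + 1) - vs, Cop (v k - vs)⟫ := by
        rw [← hCsymm]
        exact real_inner_comm _ _
      rw [hc]; ring
    rw [hab]
    linarith [hexp, hCpsd ((v (k + 1) - vs) + (v k - vs))]
  have htDv2 : Tendsto (fun k => ‖v (k + 1) - v k‖ ^ 2) atTop (𝓝 0) := by
    have hA : Tendsto (fun k => lam * ‖v (k + 1) - v k‖ ^ 2) atTop (𝓝 0) := by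
      have h := htm.add (htDC.const_mul (lam ^ 2))
      have heq : (fun k => (lam * ‖v (k + 1) - v k‖ ^ 2
          - lam ^ 2 * ⟪v (k + 1) - v k, Cop (v (k + 1) - v k)⟫)
          + lam ^ 2 * ⟪v (k + 1) - v k, Cop (v (k + 1) - v k)⟫)
          = fun k => lam * ‖v (k + 1) - v k‖ ^ 2 := by
        funext k; ring
      rw [heq] at h
      simpa only [mul_zero, add_zero] using h
    have heq2 : (fun k => ‖v (k + 1) - v k‖ ^ 2)
        = fun k => (1 / lam) * (lam * ‖v (k + 1) - v k‖ ^ 2) := by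
      funext k
      rw [← mul_assoc, one_div, inv_mul_cancel₀ (ne_of_gt hlam), one_mul]
    rw [heq2]
    simpa only [mul_zero] using hA.const_mul (1 / lam)
  have htDvn : Tendsto (fun k => ‖v (k + 1) - v k‖) atTop (𝓝 0) := by
    have heq : (fun k => ‖v (k + 1) - v k‖)
        = fun k => Real.sqrt (‖v (k + 1) - v k‖ ^ 2) := by
      funext k; rw [Real.sqrt_sq (norm_nonneg _)]
    rw [heq]
    have := (Real.continuous_sqrt.tendsto 0).comp htDv2
    simpa only [Function.comp_def, Real.sqrt_zero] using this
  have htqn : Tendsto (fun k => ‖gradf₂ (u k) - gradf₂ us‖) atTop (𝓝 0) := by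
    have heq : (fun k => ‖gradf₂ (u k) - gradf₂ us‖)
        = fun k => Real.sqrt (‖gradf₂ (u k) - gradf₂ us‖ ^ 2) := by
      funext k; rw [Real.sqrt_sq (norm_nonneg _)]
    rw [heq]
    have := (Real.continuous_sqrt.tendsto 0).comp htq
    simpa only [Function.comp_def, Real.sqrt_zero] using this
  have htq_vec : Tendsto (fun k => gradf₂ (u k) - gradf₂ us) atTop (𝓝 0) :=
    tendsto_zero_iff_norm_tendsto_zero.mpr htqn
  have htzb2 : Tendsto (fun k => ‖Qinv (Badj (v (k + 1) - vs))‖ ^ 2) atTop (𝓝 0) := by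
    refine squeeze_zero (fun k => sq_nonneg _) (fun k => hzb _) ?_
    simpa only [mul_zero] using htVV1.const_mul ‖Qinv‖
  have htzbn : Tendsto (fun k => ‖Qinv (Badj (v (k + 1) - vs))‖) atTop (𝓝 0) := by
    have heq : (fun k => ‖Qinv (Badj (v (k + 1) - vs))‖)
        = fun k => Real.sqrt (‖Qinv (Badj (v (k + 1) - vs))‖ ^ 2) := by
      funext k; rw [Real.sqrt_sq (norm_nonneg _)]
    rw [heq]
    have := (Real.continuous_sqrt.tendsto 0).comp htzb2
    simpa only [Function.comp_def, Real.sqrt_zero] using this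
  have htzb_vec : Tendsto (fun k => Qinv (Badj (v (k + 1) - vs))) atTop (𝓝 0) :=
    tendsto_zero_iff_norm_tendsto_zero.mpr htzbn
  have htDu : Tendsto (fun k => u (k + 1) - u k) atTop (𝓝 0) := by
    have heq : (fun k => u (k + 1) - u k)
        = fun k => -(Qinv (gradf₂ (u k) - gradf₂ us))
            - lam • Qinv (Badj (v (k + 1) - vs)) := by
      funext k
      have h2 : u (k + 1) - u k = (u (k + 1) - us) - (u k - us) := by abel
      rw [h2, hudiff k]
      simp only [hsE]
      abel
    rw [heq]
    have t1 : Tendsto (fun k => Qinv (gradf₂ (u k) - gradf₂ us)) atTop (𝓝 0) := by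
      have := (Qinv.continuous.tendsto 0).comp htq_vec
      simpa only [Function.comp_def, map_zero] using this
    have := (t1.neg).sub (htzb_vec.const_smul lam)
    simpa only [neg_zero, smul_zero, sub_zero] using this
  have htQD : Tendsto (fun k => ⟪u (k + 1) - u k, Q (u (k + 1) - u k)⟫) atTop (𝓝 0) := by
    have hQ0 : Tendsto (fun k => Q (u (k + 1) - u k)) atTop (𝓝 0) := by
      have := (Q.continuous.tendsto 0).comp htDu
      simpa only [Function.comp_def, map_zero] using this
    have := Filter.Tendsto.inner (𝕜 := ℝ) htDu hQ0
    simpa only [inner_zero_left] using this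
  refine ⟨?_, htDvn, ?_⟩
  · have hsum : Tendsto (fun k => ⟪u (k + 1) - u k, Q (u (k + 1) - u k)⟫
        + lam * ‖v (k + 1) - v k‖ ^ 2) atTop (𝓝 0) := by
      simpa only [mul_zero, add_zero] using htQD.add (htDv2.const_mul lam)
    have := (Real.continuous_sqrt.tendsto 0).comp hsum
    simpa only [Function.comp_def, Real.sqrt_zero] using this
  · have := (Real.continuous_sqrt.tendsto 0).comp htQD
    simpa only [Function.comp_def, Real.sqrt_zero] using this
end
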